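/- arXiv:1303.5324 — 13 statements merged into one kernel-verified Lean document; each statement's English description precedes it below -/
import Mathlib

section
/- Permanence of the Lyapunov equation: suppose the operator-valued functions B, C, X satisfy the vessel differential equations B'(x) = -(A∘B(x)∘σ₂ + B(x)∘γ)∘σ₁⁻¹, C'(x) = σ₁⁻¹∘(-σ₂∘C(x)∘A_ζ + γ∘C(x)), and X'(x) = B(x)∘σ₂∘C(x) for all x ∈ ℝ. If the Lyapunov equation A∘X(x₀) + X(x₀)∘A_ζ + B(x₀)∘σ₁∘C(x₀) = 0 holds for some x₀ ∈ ℝ, then it holds for every x ∈ ℝ. -/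
open ContinuousLinearMap

section Aux

variable {E F G : Type*} [NormedAddCommGroup E] [NormedSpace ℂ E]
  [NormedAddCommGroup F] [NormedSpace ℂ F] [NormedAddCommGroup G] [NormedSpace ℂ G]

theorem isBoundedBilinearMap_comp' :
    IsBoundedBilinearMap ℝ (fun p : (F →L[ℂ] G) × (E →L[ℂ] F) => p.1 ∘L p.2) where
  add_left _ _ _ := add_comp _ _ _
  smul_left c x y := by ext v; simp
  add_right _ _ _ := comp_add _ _ _
  smul_right c x y := by ext v; simp
  bound := ⟨1, one_pos, fun x y => by simpa using opNorm_comp_le x y⟩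

theorem HasDerivAt.clm_comp' {c : ℝ → F →L[ℂ] G} {c' : F →L[ℂ] G}
    {d : ℝ → E →L[ℂ] F} {d' : E →L[ℂ] F} {x : ℝ}
    (hc : HasDerivAt c c' x) (hd : HasDerivAt d d' x) :
    HasDerivAt (fun y => c y ∘L d y) (c' ∘L d x + c x ∘L d') x := by
  have h := (isBoundedBilinearMap_comp'.hasFDerivAt (c x, d x)).comp x
    (HasFDerivAt.prodMk hc.hasFDerivAt hd.hasFDerivAt)
  have h2 := h.hasDerivAt
  simp [IsBoundedBilinearMap.deriv_apply, add_comm] at h2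
  exact h2

end Aux

/-- **Permanence of the Lyapunov equation.**  If the operator-valued functions
`B`, `C`, `X` satisfy the vessel differential equations and the Lyapunov equation
`A ∘ X + X ∘ A_ζ + B σ₁ C = 0` holds at one point `x₀`, then it holds everywhere. -/
theorem lyapunov_permanence
    {H : Type*} [NormedAddCommGroup H] [InnerProductSpace ℂ H] [CompleteSpace H]
    (σ₁ σ₁inv σ₂ γ : (Fin 2 → ℂ) →L[ℂ] (Fin 2 → ℂ))
    (hσ₁ : σ₁ ∘L σ₁inv = 1) (hσ₁inv : σ₁inv ∘L σ₁ = 1)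
    (A Aζ : H →L[ℂ] H)
    (B : ℝ → ((Fin 2 → ℂ) →L[ℂ] H))
    (C : ℝ → (H →L[ℂ] (Fin 2 → ℂ)))
    (X : ℝ → (H →L[ℂ] H))
    (hB : ∀ x : ℝ, HasDerivAt B ((-((A ∘L B x) ∘L σ₂ + B x ∘L γ)) ∘L σ₁inv) x)
    (hC : ∀ x : ℝ, HasDerivAt C (σ₁inv ∘L (-(σ₂ ∘L (C x ∘L Aζ)) + γ ∘L C x)) x)
    (hX : ∀ x : ℝ, HasDerivAt X ((B x ∘L σ₂) ∘L C x) x)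
    (x₀ : ℝ)
    (h₀ : A ∘L X x₀ + X x₀ ∘L Aζ + (B x₀ ∘L σ₁) ∘L C x₀ = 0) :
    ∀ x : ℝ, A ∘L X x + X x ∘L Aζ + (B x ∘L σ₁) ∘L C x = 0 := by
  set Fn : ℝ → (H →L[ℂ] H) := fun x => A ∘L X x + X x ∘L Aζ + (B x ∘L σ₁) ∘L C x with hFn
  have hF' : ∀ x : ℝ, HasDerivAt Fn 0 x := by
    intro x
    have h1 : HasDerivAt (fun y => A ∘L X y)
        ((0 : H →L[ℂ] H) ∘L X x + A ∘L ((B x ∘L σ₂) ∘L C x)) x :=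
      (hasDerivAt_const x A).clm_comp' (hX x)
    have h2 : HasDerivAt (fun y => X y ∘L Aζ)
        (((B x ∘L σ₂) ∘L C x) ∘L Aζ + X x ∘L (0 : H →L[ℂ] H)) x :=
      (hX x).clm_comp' (hasDerivAt_const x Aζ)
    have h3 : HasDerivAt (fun y => B y ∘L σ₁)
        (((-((A ∘L B x) ∘L σ₂ + B x ∘L γ)) ∘L σ₁inv) ∘L σ₁
          + B x ∘L (0 : (Fin 2 → ℂ) →L[ℂ] (Fin 2 → ℂ))) x :=
      (hB x).clm_comp' (hasDerivAt_const x σ₁)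
    have h4 : HasDerivAt (fun y => (B y ∘L σ₁) ∘L C y)
        ((((-((A ∘L B x) ∘L σ₂ + B x ∘L γ)) ∘L σ₁inv) ∘L σ₁
            + B x ∘L (0 : (Fin 2 → ℂ) →L[ℂ] (Fin 2 → ℂ))) ∘L C x
          + (B x ∘L σ₁) ∘L (σ₁inv ∘L (-(σ₂ ∘L (C x ∘L Aζ)) + γ ∘L C x))) x :=
      h3.clm_comp' (hC x)
    have := (h1.add h2).add h4
    refine this.congr_deriv ?_
    rw [comp_assoc _ σ₁inv σ₁, hσ₁inv, comp_assoc (B x) σ₁ _, ← comp_assoc σ₁ σ₁inv _, hσ₁]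
    simp only [comp_zero, zero_comp, add_zero, zero_add, one_def, comp_id, id_comp,
      neg_comp, comp_neg, add_comp, comp_add, comp_assoc]
    abel
  intro x
  have : Fn x = Fn x₀ :=
    is_const_of_deriv_eq_zero (fun y => (hF' y).differentiableAt)
      (fun y => (hF' y).deriv) x x₀
  rw [hFn] at this
  simpa [this] using h₀
end

section
/- If the bounded operators A, A_ζ, X on H and B : ℂ² → H, C : H → ℂ² satisfy the Lyapunov equation A∘X + X∘A_ζ + B∘σ₁∘C = 0 and λ ∈ ℂ is such that both λ·I − A and λ·I + A_ζ are invertible in L(H,H) and X is invertible, then the 2×2 matrix S(λ) = I − C∘X⁻¹∘(λ·I − A)⁻¹∘B∘σ₁ is invertible with two-sided inverse T(λ) = I + C∘(λ·I + A_ζ)⁻¹∘X⁻¹∘B∘σ₁; that is, S(λ)∘T(λ) = I and T(λ)∘S(λ) = I as linear maps on ℂ². -/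
open ContinuousLinearMap

/-- **Inverse of the transfer function.**  If the Lyapunov equation holds and
`λI - A`, `λI + A_ζ`, `X` are invertible, then
`S(λ) = I - C X⁻¹ (λI - A)⁻¹ B σ₁` has two-sided inverse
`T(λ) = I + C (λI + A_ζ)⁻¹ X⁻¹ B σ₁`. -/
theorem transfer_function_inverse
    {H : Type*} [NormedAddCommGroup H] [InnerProductSpace ℂ H] [CompleteSpace H]
    (σ₁ : (Fin 2 → ℂ) →L[ℂ] (Fin 2 → ℂ))
    (σ₁inv : (Fin 2 → ℂ) →L[ℂ] (Fin 2 → ℂ))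
    (hσ₁ : σ₁ ∘L σ₁inv = 1) (hσ₁inv : σ₁inv ∘L σ₁ = 1)
    (A Aζ X Xinv : H →L[ℂ] H)
    (hX : X ∘L Xinv = 1) (hXinv : Xinv ∘L X = 1)
    (B : (Fin 2 → ℂ) →L[ℂ] H) (C : H →L[ℂ] (Fin 2 → ℂ))
    (l : ℂ) (R Rζ : H →L[ℂ] H)
    (hR : (l • (1 : H →L[ℂ] H) - A) ∘L R = 1)
    (hR' : R ∘L (l • (1 : H →L[ℂ] H) - A) = 1)
    (hRζ : (l • (1 : H →L[ℂ] H) + Aζ) ∘L Rζ = 1)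
    (hRζ' : Rζ ∘L (l • (1 : H →L[ℂ] H) + Aζ) = 1)
    (hLyap : A ∘L X + X ∘L Aζ + (B ∘L σ₁) ∘L C = 0) :
    ((1 : (Fin 2 → ℂ) →L[ℂ] (Fin 2 → ℂ)) - C ∘L (Xinv ∘L (R ∘L (B ∘L σ₁)))) ∘L
        ((1 : (Fin 2 → ℂ) →L[ℂ] (Fin 2 → ℂ)) + C ∘L (Rζ ∘L (Xinv ∘L (B ∘L σ₁)))) = 1 ∧
      ((1 : (Fin 2 → ℂ) →L[ℂ] (Fin 2 → ℂ)) + C ∘L (Rζ ∘L (Xinv ∘L (B ∘L σ₁)))) ∘L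
        ((1 : (Fin 2 → ℂ) →L[ℂ] (Fin 2 → ℂ)) - C ∘L (Xinv ∘L (R ∘L (B ∘L σ₁)))) = 1 := by
  -- applied versions of the hypotheses (composed with an arbitrary tail `W`)
  have e1 : ∀ W : (Fin 2 → ℂ) →L[ℂ] H, X ∘L (Xinv ∘L W) = W := fun W => by
    rw [← comp_assoc, hX, one_def, id_comp]
  have e2 : ∀ W : (Fin 2 → ℂ) →L[ℂ] H, Xinv ∘L (X ∘L W) = W := fun W => by
    rw [← comp_assoc, hXinv, one_def, id_comp]
  have e3 : ∀ W : (Fin 2 → ℂ) →L[ℂ] H, R ∘L (A ∘L W) = l • (R ∘L W) - W := fun W => by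
    have h := congrArg (fun T => T ∘L W) hR'
    simp only [comp_assoc, sub_comp, smul_comp, comp_sub, comp_smul, one_def, id_comp] at h
    rw [sub_eq_iff_eq_add] at h
    rw [eq_sub_iff_add_eq, h]
    abel
  have e4 : ∀ W : (Fin 2 → ℂ) →L[ℂ] H, A ∘L (R ∘L W) = l • (R ∘L W) - W := fun W => by
    have h := congrArg (fun T => T ∘L W) hR
    simp only [comp_assoc, sub_comp, smul_comp, comp_sub, comp_smul, one_def, id_comp] at h
    rw [sub_eq_iff_eq_add] at h
    rw [eq_sub_iff_add_eq, h]
    abel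
  have e5 : ∀ W : (Fin 2 → ℂ) →L[ℂ] H, Aζ ∘L (Rζ ∘L W) = W - l • (Rζ ∘L W) := fun W => by
    have h := congrArg (fun T => T ∘L W) hRζ
    simp only [comp_assoc, add_comp, smul_comp, comp_add, comp_smul, one_def, id_comp] at h
    rw [eq_sub_iff_add_eq, add_comm]
    exact h
  have e6 : ∀ W : (Fin 2 → ℂ) →L[ℂ] H, Rζ ∘L (Aζ ∘L W) = W - l • (Rζ ∘L W) := fun W => by
    have h := congrArg (fun T => T ∘L W) hRζ'
    simp only [comp_assoc, add_comp, smul_comp, comp_add, comp_smul, one_def, id_comp] at h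
    rw [eq_sub_iff_add_eq, add_comm]
    exact h
  have e7 : ∀ W : (Fin 2 → ℂ) →L[ℂ] H,
      B ∘L (σ₁ ∘L (C ∘L W)) = -(A ∘L (X ∘L W)) - X ∘L (Aζ ∘L W) := fun W => by
    have h := congrArg (fun T => T ∘L W) hLyap
    simp only [comp_assoc, add_comp, zero_comp] at h
    rw [eq_neg_of_add_eq_zero_right h]
    abel
  constructor
  · simp only [comp_add, add_comp, comp_sub, sub_comp, comp_neg, neg_comp, comp_smul,
      smul_comp, one_def, id_comp, comp_id, comp_assoc, e7, e3, e5, e1, e2]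
    module
  · simp only [comp_add, add_comp, comp_sub, sub_comp, comp_neg, neg_comp, comp_smul,
      smul_comp, one_def, id_comp, comp_id, comp_assoc, e7, e4, e6, e1, e2]
    module
end

section
/- Derivative formulas for C X⁻¹ and X⁻¹ B: in the bounded vessel setting, for every x ∈ ℝ one has σ₁∘(d/dx)[C(x)∘X(x)⁻¹] = σ₂∘C(x)∘X(x)⁻¹∘A + γ*(x)∘C(x)∘X(x)⁻¹ and (d/dx)[X(x)⁻¹∘B(x)]∘σ₁ = A_ζ∘X(x)⁻¹∘B(x)∘σ₂ − X(x)⁻¹∘B(x)∘γ*(x). -/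
open ContinuousLinearMap

/-- The linkage matrix `γ*(x) = γ + σ₂ C X⁻¹ B σ₁ - σ₁ C X⁻¹ B σ₂`. -/
noncomputable def gammaStar {H : Type*} [NormedAddCommGroup H] [NormedSpace ℂ H]
    (σ₁ σ₂ γ : (Fin 2 → ℂ) →L[ℂ] (Fin 2 → ℂ))
    (B : ℝ → ((Fin 2 → ℂ) →L[ℂ] H)) (C : ℝ → (H →L[ℂ] (Fin 2 → ℂ)))
    (Xinv : ℝ → (H →L[ℂ] H)) (x : ℝ) : (Fin 2 → ℂ) →L[ℂ] (Fin 2 → ℂ) :=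
  γ + σ₂ ∘L (((C x ∘L Xinv x) ∘L B x) ∘L σ₁) - σ₁ ∘L (((C x ∘L Xinv x) ∘L B x) ∘L σ₂)

/-- Composition of `ℂ`-linear maps is a bounded `ℝ`-bilinear map. -/
lemma isBoundedBilinearMap_comp_real {E F G : Type*}
    [NormedAddCommGroup E] [NormedSpace ℂ E]
    [NormedAddCommGroup F] [NormedSpace ℂ F]
    [NormedAddCommGroup G] [NormedSpace ℂ G] :
    IsBoundedBilinearMap ℝ fun p : (F →L[ℂ] G) × (E →L[ℂ] F) => p.1.comp p.2 := by
  have h := isBoundedBilinearMap_comp (𝕜 := ℂ) (E := E) (F := F) (G := G)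
  exact ⟨h.add_left,
    fun r p q => by simpa [Complex.coe_smul] using h.smul_left (r : ℂ) p q,
    h.add_right,
    fun r p q => by simpa [Complex.coe_smul] using h.smul_right (r : ℂ) p q,
    h.bound⟩

/-- Leibniz rule for composition of `ℂ`-linear-map valued functions of a real variable. -/
lemma HasDerivAt.clm_comp_real {E F G : Type*}
    [NormedAddCommGroup E] [NormedSpace ℂ E]
    [NormedAddCommGroup F] [NormedSpace ℂ F]
    [NormedAddCommGroup G] [NormedSpace ℂ G]
    {c : ℝ → F →L[ℂ] G} {c' : F →L[ℂ] G} {d : ℝ → E →L[ℂ] F} {d' : E →L[ℂ] F} {x : ℝ}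
    (hc : HasDerivAt c c' x) (hd : HasDerivAt d d' x) :
    HasDerivAt (fun y => (c y).comp (d y)) (c'.comp (d x) + (c x).comp d') x := by
  have h := ((isBoundedBilinearMap_comp_real (E := E) (F := F) (G := G)).hasFDerivAt
      (c x, d x)).comp_hasDerivAt x (hc.prodMk hd)
  refine h.congr_deriv ?_
  rw [IsBoundedBilinearMap.deriv_apply]
  abel

/-- **Derivative formulas for `C X⁻¹` and `X⁻¹ B`** in the bounded vessel setting:
`σ₁ (C X⁻¹)' = σ₂ C X⁻¹ A + γ* C X⁻¹` and `(X⁻¹ B)' σ₁ = A_ζ X⁻¹ B σ₂ - X⁻¹ B γ*`. -/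
theorem deriv_CXinv_and_XinvB
    {H : Type*} [NormedAddCommGroup H] [InnerProductSpace ℂ H] [CompleteSpace H]
    (σ₁ σ₁inv σ₂ γ : (Fin 2 → ℂ) →L[ℂ] (Fin 2 → ℂ))
    (hσ₁ : σ₁ ∘L σ₁inv = 1) (hσ₁inv : σ₁inv ∘L σ₁ = 1)
    (A Aζ : H →L[ℂ] H)
    (B : ℝ → ((Fin 2 → ℂ) →L[ℂ] H))
    (C : ℝ → (H →L[ℂ] (Fin 2 → ℂ)))
    (X Xinv : ℝ → (H →L[ℂ] H))
    (hXinv : ∀ x : ℝ, X x ∘L Xinv x = 1) (hXinv' : ∀ x : ℝ, Xinv x ∘L X x = 1)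
    (hB : ∀ x : ℝ, HasDerivAt B ((-((A ∘L B x) ∘L σ₂ + B x ∘L γ)) ∘L σ₁inv) x)
    (hC : ∀ x : ℝ, HasDerivAt C (σ₁inv ∘L (-(σ₂ ∘L (C x ∘L Aζ)) + γ ∘L C x)) x)
    (hX : ∀ x : ℝ, HasDerivAt X ((B x ∘L σ₂) ∘L C x) x)
    (hLyap : ∀ x : ℝ, A ∘L X x + X x ∘L Aζ + (B x ∘L σ₁) ∘L C x = 0) :
    (∃ D : ℝ → (H →L[ℂ] (Fin 2 → ℂ)),
      (∀ x : ℝ, HasDerivAt (fun y => C y ∘L Xinv y) (D x) x) ∧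
      ∀ x : ℝ, σ₁ ∘L D x =
        σ₂ ∘L ((C x ∘L Xinv x) ∘L A) +
          gammaStar σ₁ σ₂ γ B C Xinv x ∘L (C x ∘L Xinv x)) ∧
    (∃ E : ℝ → ((Fin 2 → ℂ) →L[ℂ] H),
      (∀ x : ℝ, HasDerivAt (fun y => Xinv y ∘L B y) (E x) x) ∧
      ∀ x : ℝ, E x ∘L σ₁ =
        Aζ ∘L ((Xinv x ∘L B x) ∘L σ₂) -
          (Xinv x ∘L B x) ∘L gammaStar σ₁ σ₂ γ B C Xinv x) := by
  -- the units given by `X`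
  let u : ℝ → (H →L[ℂ] H)ˣ := fun x => ⟨X x, Xinv x, hXinv x, hXinv' x⟩
  -- derivative of `Xinv`
  set Xi' : ℝ → (H →L[ℂ] H) :=
    fun x => -(Xinv x ∘L (((B x ∘L σ₂) ∘L C x) ∘L Xinv x)) with hXi'def
  have hXi : ∀ x : ℝ, HasDerivAt Xinv (Xi' x) x := by
    intro x
    have h1 : HasFDerivAt Ring.inverse
        (-(mulLeftRight ℂ (H →L[ℂ] H) ((u x)⁻¹ : (H →L[ℂ] H)ˣ) ((u x)⁻¹ : (H →L[ℂ] H)ˣ)))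
        (X x) := hasFDerivAt_ringInverse (𝕜 := ℂ) (u x)
    have h2 := (h1.restrictScalars ℝ).comp_hasDerivAt x (hX x)
    have hfun : (fun y : ℝ => Ring.inverse (X y)) = Xinv := by
      funext y
      exact Ring.inverse_unit (u y)
    rw [show (Ring.inverse ∘ X) = (fun y : ℝ => Ring.inverse (X y)) from rfl, hfun] at h2
    refine h2.congr_deriv ?_
    rfl
  constructor
  · -- the `C X⁻¹` part
    refine ⟨fun x => (σ₁inv ∘L (-(σ₂ ∘L (C x ∘L Aζ)) + γ ∘L C x)) ∘L Xinv x
        + C x ∘L Xi' x, fun x => (hC x).clm_comp_real (hXi x), fun x => ?_⟩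
    have cancel1 : ∀ w : H →L[ℂ] H, Xinv x ∘L (X x ∘L w) = w := fun w => by
      rw [← comp_assoc, hXinv' x, one_def, id_comp]
    have key : Xinv x ∘L A + Aζ ∘L Xinv x
        + Xinv x ∘L (B x ∘L (σ₁ ∘L (C x ∘L Xinv x))) = 0 := by
      have h0 := congrArg (fun T : H →L[ℂ] H => Xinv x ∘L (T ∘L Xinv x)) (hLyap x)
      simpa only [comp_add, add_comp, comp_assoc, comp_zero, zero_comp, hXinv x,
        cancel1, one_def, comp_id] using h0
    have keyC : σ₂ ∘L (C x ∘L (Xinv x ∘L A)) + σ₂ ∘L (C x ∘L (Aζ ∘L Xinv x))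
        + σ₂ ∘L (C x ∘L (Xinv x ∘L (B x ∘L (σ₁ ∘L (C x ∘L Xinv x))))) = 0 := by
      have h0 := congrArg (fun T : H →L[ℂ] H => σ₂ ∘L (C x ∘L T)) key
      simpa only [comp_add, comp_zero] using h0
    have cσ : ∀ w : H →L[ℂ] (Fin 2 → ℂ), σ₁ ∘L (σ₁inv ∘L w) = w := fun w => by
      rw [← comp_assoc, hσ₁, one_def, id_comp]
    have expand : σ₁ ∘L ((σ₁inv ∘L (-(σ₂ ∘L (C x ∘L Aζ)) + γ ∘L C x)) ∘L Xinv x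
          + C x ∘L Xi' x)
        = (σ₂ ∘L ((C x ∘L Xinv x) ∘L A)
            + gammaStar σ₁ σ₂ γ B C Xinv x ∘L (C x ∘L Xinv x))
          + -(σ₂ ∘L (C x ∘L (Xinv x ∘L A)) + σ₂ ∘L (C x ∘L (Aζ ∘L Xinv x))
            + σ₂ ∘L (C x ∘L (Xinv x ∘L (B x ∘L (σ₁ ∘L (C x ∘L Xinv x)))))) := by
      simp only [hXi'def, gammaStar, comp_add, add_comp, comp_sub, sub_comp,
        comp_neg, neg_comp, comp_assoc, cσ]
      abel
    rw [expand, keyC, neg_zero, add_zero]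
  · -- the `X⁻¹ B` part
    refine ⟨fun x => Xi' x ∘L B x
        + Xinv x ∘L ((-((A ∘L B x) ∘L σ₂ + B x ∘L γ)) ∘L σ₁inv),
      fun x => (hXi x).clm_comp_real (hB x), fun x => ?_⟩
    have cancel1 : ∀ w : H →L[ℂ] H, Xinv x ∘L (X x ∘L w) = w := fun w => by
      rw [← comp_assoc, hXinv' x, one_def, id_comp]
    have key : Xinv x ∘L A + Aζ ∘L Xinv x
        + Xinv x ∘L (B x ∘L (σ₁ ∘L (C x ∘L Xinv x))) = 0 := by
      have h0 := congrArg (fun T : H →L[ℂ] H => Xinv x ∘L (T ∘L Xinv x)) (hLyap x)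
      simpa only [comp_add, add_comp, comp_assoc, comp_zero, zero_comp, hXinv x,
        cancel1, one_def, comp_id] using h0
    have keyB : Xinv x ∘L (A ∘L (B x ∘L σ₂)) + Aζ ∘L (Xinv x ∘L (B x ∘L σ₂))
        + Xinv x ∘L (B x ∘L (σ₁ ∘L (C x ∘L (Xinv x ∘L (B x ∘L σ₂))))) = 0 := by
      have h0 := congrArg (fun T : H →L[ℂ] H => T ∘L (B x ∘L σ₂)) key
      simpa only [add_comp, zero_comp, comp_assoc] using h0
    have expand : (Xi' x ∘L B x
          + Xinv x ∘L ((-((A ∘L B x) ∘L σ₂ + B x ∘L γ)) ∘L σ₁inv)) ∘L σ₁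
        = (Aζ ∘L ((Xinv x ∘L B x) ∘L σ₂)
            - (Xinv x ∘L B x) ∘L gammaStar σ₁ σ₂ γ B C Xinv x)
          + -(Xinv x ∘L (A ∘L (B x ∘L σ₂)) + Aζ ∘L (Xinv x ∘L (B x ∘L σ₂))
            + Xinv x ∘L (B x ∘L (σ₁ ∘L (C x ∘L (Xinv x ∘L (B x ∘L σ₂)))))) := by
      simp only [hXi'def, gammaStar, comp_add, add_comp, comp_sub, sub_comp,
        comp_neg, neg_comp, comp_assoc, hσ₁inv, one_def, comp_id]
      abel
    rw [expand, keyB, neg_zero, add_zero]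
end

section
/- Bäcklund transformation theorem: in the bounded vessel setting, let λ ∈ ℂ be such that λ·I − A is invertible, and let u : ℝ → ℂ² be differentiable with λ σ₂ u(x) − σ₁ u'(x) + γ u(x) = 0 for all x. Define S(λ,x) := I − C(x)∘X(x)⁻¹∘(λ·I − A)⁻¹∘B(x)∘σ₁ and y(x) := S(λ,x) u(x). Then y is differentiable and λ σ₂ y(x) − σ₁ y'(x) + γ*(x) y(x) = 0 for all x ∈ ℝ. -/
open ContinuousLinearMap

lemma clm_apply_real' {E F : Type*} [NormedAddCommGroup E] [NormedSpace ℂ E]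
    [NormedAddCommGroup F] [NormedSpace ℂ F]
    {c : ℝ → E →L[ℂ] F} {c' : E →L[ℂ] F} {u : ℝ → E} {u' : E} {x : ℝ}
    (hc : HasDerivAt c c' x) (hu : HasDerivAt u u' x) :
    HasDerivAt (fun z => c z (u z)) (c' (u x) + c x u') x := by
  have h1 : HasDerivAt (fun z => (c z).restrictScalars ℝ) (c'.restrictScalars ℝ) x :=
    (restrictScalarsL ℂ E F ℝ ℝ).hasFDerivAt.comp_hasDerivAt x hc
  exact h1.clm_apply hu

/-- The transfer function `S(λ, x) = I - C(x) X(x)⁻¹ (λI - A)⁻¹ B(x) σ₁`,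
with `R = (λI - A)⁻¹`. -/
noncomputable def transferS {H : Type*} [NormedAddCommGroup H] [NormedSpace ℂ H]
    (σ₁ : (Fin 2 → ℂ) →L[ℂ] (Fin 2 → ℂ))
    (B : ℝ → ((Fin 2 → ℂ) →L[ℂ] H)) (C : ℝ → (H →L[ℂ] (Fin 2 → ℂ)))
    (Xinv : ℝ → (H →L[ℂ] H)) (R : H →L[ℂ] H) (x : ℝ) :
    (Fin 2 → ℂ) →L[ℂ] (Fin 2 → ℂ) :=
  1 - C x ∘L (Xinv x ∘L (R ∘L (B x ∘L σ₁)))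

/-- **Bäcklund transformation theorem.**  If `u` solves the input ODE
`λ σ₂ u - σ₁ u' + γ u = 0`, then `y = S(λ,·) u` is differentiable and solves the
output ODE `λ σ₂ y - σ₁ y' + γ* y = 0`. -/
theorem backlund_transformation
    {H : Type*} [NormedAddCommGroup H] [InnerProductSpace ℂ H] [CompleteSpace H]
    (σ₁ σ₁inv σ₂ γ : (Fin 2 → ℂ) →L[ℂ] (Fin 2 → ℂ))
    (hσ₁ : σ₁ ∘L σ₁inv = 1) (hσ₁inv : σ₁inv ∘L σ₁ = 1)
    (A Aζ : H →L[ℂ] H)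
    (B : ℝ → ((Fin 2 → ℂ) →L[ℂ] H))
    (C : ℝ → (H →L[ℂ] (Fin 2 → ℂ)))
    (X Xinv : ℝ → (H →L[ℂ] H))
    (hXinv : ∀ x : ℝ, X x ∘L Xinv x = 1) (hXinv' : ∀ x : ℝ, Xinv x ∘L X x = 1)
    (hB : ∀ x : ℝ, HasDerivAt B ((-((A ∘L B x) ∘L σ₂ + B x ∘L γ)) ∘L σ₁inv) x)
    (hC : ∀ x : ℝ, HasDerivAt C (σ₁inv ∘L (-(σ₂ ∘L (C x ∘L Aζ)) + γ ∘L C x)) x)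
    (hX : ∀ x : ℝ, HasDerivAt X ((B x ∘L σ₂) ∘L C x) x)
    (hLyap : ∀ x : ℝ, A ∘L X x + X x ∘L Aζ + (B x ∘L σ₁) ∘L C x = 0)
    (l : ℂ) (R : H →L[ℂ] H)
    (hR : (l • (1 : H →L[ℂ] H) - A) ∘L R = 1)
    (hR' : R ∘L (l • (1 : H →L[ℂ] H) - A) = 1)
    (u u' : ℝ → (Fin 2 → ℂ))
    (hu : ∀ x : ℝ, HasDerivAt u (u' x) x)
    (hueq : ∀ x : ℝ, l • σ₂ (u x) - σ₁ (u' x) + γ (u x) = 0) :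
    ∃ y' : ℝ → (Fin 2 → ℂ),
      (∀ x : ℝ, HasDerivAt (fun z => transferS σ₁ B C Xinv R z (u z)) (y' x) x) ∧
      ∀ x : ℝ,
        l • σ₂ (transferS σ₁ B C Xinv R x (u x)) - σ₁ (y' x) +
          gammaStar σ₁ σ₂ γ B C Xinv x (transferS σ₁ B C Xinv R x (u x)) = 0 := by
  -- pointwise versions of the algebraic hypotheses
  have hinv1 : ∀ w, σ₁inv (σ₁ w) = w := fun w => by
    simpa using ContinuousLinearMap.ext_iff.mp hσ₁inv w
  have hinv2 : ∀ w, σ₁ (σ₁inv w) = w := fun w => by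
    simpa using ContinuousLinearMap.ext_iff.mp hσ₁ w
  have hXi1 : ∀ x h, X x (Xinv x h) = h := fun x h => by
    simpa using ContinuousLinearMap.ext_iff.mp (hXinv x) h
  have hXi2 : ∀ x h, Xinv x (X x h) = h := fun x h => by
    simpa using ContinuousLinearMap.ext_iff.mp (hXinv' x) h
  have hRA : ∀ h, R (A h) = l • R h - h := by
    intro h
    have h0 := ContinuousLinearMap.ext_iff.mp hR' h
    simp only [comp_apply, sub_apply, smul_apply, ContinuousLinearMap.one_apply, map_sub, map_smul] at h0
    have h2 : R (A h) - (l • R h - h) = -((l • R h - R (A h)) - h) := by abel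
    rw [← sub_eq_zero, h2, h0, sub_self, neg_zero]
  have hAR : ∀ h, A (R h) = l • R h - h := by
    intro h
    have h0 := ContinuousLinearMap.ext_iff.mp hR h
    simp only [comp_apply, sub_apply, smul_apply, ContinuousLinearMap.one_apply] at h0
    have h2 : A (R h) - (l • R h - h) = -((l • R h - A (R h)) - h) := by abel
    rw [← sub_eq_zero, h2, h0, sub_self, neg_zero]
  have hAζ : ∀ (x : ℝ) h, Aζ (Xinv x h)
      = -(Xinv x (A h) + Xinv x (B x (σ₁ (C x (Xinv x h))))) := by
    intro x h
    have h0 := ContinuousLinearMap.ext_iff.mp (hLyap x) (Xinv x h)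
    simp only [add_apply, comp_apply, zero_apply, hXi1] at h0
    have h1 := congrArg (Xinv x) h0
    simp only [map_add, map_zero, hXi2] at h1
    have h2 : (Xinv x (A h) + Xinv x (B x (σ₁ (C x (Xinv x h))))) + Aζ (Xinv x h) = 0 := by
      rw [← h1]; abel
    exact eq_neg_of_add_eq_zero_right h2
  have hσu : ∀ x, σ₁ (u' x) = l • σ₂ (u x) + γ (u x) := by
    intro x
    have h := hueq x
    have h2 : σ₁ (u' x) - (l • σ₂ (u x) + γ (u x))
        = -(l • σ₂ (u x) - σ₁ (u' x) + γ (u x)) := by abel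
    rw [← sub_eq_zero, h2, h, neg_zero]
  -- derivative of Xinv
  have hXinvD : ∀ x, HasDerivAt Xinv (-(Xinv x ∘L (((B x ∘L σ₂) ∘L C x) ∘L Xinv x))) x := by
    intro x
    have hXz : ∀ z, Ring.inverse (X z) = Xinv z := by
      intro z
      have : Ring.inverse ((⟨X z, Xinv z, hXinv z, hXinv' z⟩ : (H →L[ℂ] H)ˣ) : H →L[ℂ] H)
          = Xinv z := Ring.inverse_unit _
      simpa using this
    have hXu : Xinv = fun z => Ring.inverse (X z) := funext fun z => (hXz z).symm
    have h := (hasFDerivAt_ringInverse (𝕜 := ℝ)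
        (⟨X x, Xinv x, hXinv x, hXinv' x⟩ : (H →L[ℂ] H)ˣ)).comp_hasDerivAt x (hX x)
    rw [hXu]
    refine h.congr_deriv ?_
    ext v
    simp [mul_def, hXz]
  refine ⟨fun x => u' x -
      ((σ₁inv ∘L (-(σ₂ ∘L (C x ∘L Aζ)) + γ ∘L C x)) (Xinv x (R (B x (σ₁ (u x)))))
        + C x ((-(Xinv x ∘L (((B x ∘L σ₂) ∘L C x) ∘L Xinv x))) (R (B x (σ₁ (u x)))))
        + C x (Xinv x (R (((-((A ∘L B x) ∘L σ₂ + B x ∘L γ)) ∘L σ₁inv) (σ₁ (u x)))))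
        + C x (Xinv x (R (B x (σ₁ (u' x)))))),
    fun x => ?_, fun x => ?_⟩
  · -- differentiability
    have h1 : HasDerivAt (fun z => σ₁ (u z)) (σ₁ (u' x)) x := by
      simpa using clm_apply_real' (hasDerivAt_const x σ₁) (hu x)
    have h2 := clm_apply_real' (hB x) h1
    have h3 := clm_apply_real' (hasDerivAt_const x R) h2
    have h4 := clm_apply_real' (hXinvD x) h3
    have h5 := clm_apply_real' (hC x) h4
    have h6 := (hu x).sub h5
    have hfun : (fun z => transferS σ₁ B C Xinv R z (u z))
        = fun z => u z - C z (Xinv z (R (B z (σ₁ (u z))))) := by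
      funext z; simp [transferS]
    rw [hfun]
    refine h6.congr_deriv ?_
    simp only [map_add, zero_apply, zero_add, comp_apply]
    abel
  · -- the output ODE
    simp only [transferS, gammaStar, sub_apply, add_apply, ContinuousLinearMap.one_apply, comp_apply,
      neg_apply, map_add, map_sub, map_neg, map_smul, smul_sub, smul_add,
      hinv1, hinv2, hσu x, hRA, hAR, hAζ x, neg_add, neg_neg, neg_sub]
    module
end

section
/- Differential equation for the transfer function: in the bounded vessel setting, let λ ∈ ℂ be such that λ·I − A is invertible and define S(λ,x) := I − C(x)∘X(x)⁻¹∘(λ·I − A)⁻¹∘B(x)∘σ₁. Then x ↦ S(λ,x) is differentiable and ∂ₓ S(λ,x) = σ₁⁻¹ (λ σ₂ + γ*(x)) S(λ,x) − S(λ,x) σ₁⁻¹ (λ σ₂ + γ) for all x ∈ ℝ. -/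
set_option maxHeartbeats 1000000

open ContinuousLinearMap

/-- Product rule for composing families of `ℂ`-linear maps along a real parameter. -/
lemma aux_comp_deriv {E F G : Type*} [NormedAddCommGroup E] [NormedSpace ℂ E]
    [NormedAddCommGroup F] [NormedSpace ℂ F] [NormedAddCommGroup G] [NormedSpace ℂ G]
    {u : ℝ → (F →L[ℂ] G)} {v : ℝ → (E →L[ℂ] F)} {u' : F →L[ℂ] G} {v' : E →L[ℂ] F} {x : ℝ}
    (hu : HasDerivAt u u' x) (hv : HasDerivAt v v' x) :
    HasDerivAt (fun z => u z ∘L v z) (u' ∘L v x + u x ∘L v') x := by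
  have hbil : IsBoundedBilinearMap ℝ (fun p : (F →L[ℂ] G) × (E →L[ℂ] F) => p.1.comp p.2) :=
    { add_left := fun f₁ f₂ g => add_comp f₁ f₂ g
      smul_left := fun c f g => smul_comp c f g
      add_right := fun f g₁ g₂ => comp_add f g₁ g₂
      smul_right := fun c f g => comp_smul f c g
      bound := ⟨1, one_pos, fun f g => by simpa using f.opNorm_comp_le g⟩ }
  have h := (hbil.hasFDerivAt (u x, v x)).comp_hasDerivAt x (hu.prodMk hv)
  simpa [IsBoundedBilinearMap.deriv_apply, add_comm, Function.comp_def] using h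

lemma aux_inv_deriv {H : Type*} [NormedAddCommGroup H] [NormedSpace ℂ H] [CompleteSpace H]
    (X Xinv : ℝ → (H →L[ℂ] H))
    (hXinv : ∀ x : ℝ, X x ∘L Xinv x = 1) (hXinv' : ∀ x : ℝ, Xinv x ∘L X x = 1)
    {X' : H →L[ℂ] H} {x : ℝ} (hX : HasDerivAt X X' x) :
    HasDerivAt Xinv (-(Xinv x ∘L (X' ∘L Xinv x))) x := by
  have hu : ∀ z : ℝ, Xinv z = Ring.inverse (X z) := by
    intro z
    exact (Ring.inverse_unit ⟨X z, Xinv z, hXinv z, hXinv' z⟩).symm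
  have h := (hasFDerivAt_ringInverse (𝕜 := ℝ)
    (⟨X x, Xinv x, hXinv x, hXinv' x⟩ : (H →L[ℂ] H)ˣ)).comp_hasDerivAt x hX
  have : HasDerivAt (fun z => Ring.inverse (X z)) (-(Xinv x * X' * Xinv x)) x := by
    simpa [ContinuousLinearMap.mulLeftRight_apply, mul_assoc, Function.comp_def] using h
  simp only [← hu] at this
  exact this

/-- **Differential equation for the transfer function:**
`∂ₓ S(λ,x) = σ₁⁻¹ (λσ₂ + γ*(x)) S(λ,x) - S(λ,x) σ₁⁻¹ (λσ₂ + γ)`. -/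
theorem transfer_function_ODE
    {H : Type*} [NormedAddCommGroup H] [InnerProductSpace ℂ H] [CompleteSpace H]
    (σ₁ σ₁inv σ₂ γ : (Fin 2 → ℂ) →L[ℂ] (Fin 2 → ℂ))
    (hσ₁ : σ₁ ∘L σ₁inv = 1) (hσ₁inv : σ₁inv ∘L σ₁ = 1)
    (A Aζ : H →L[ℂ] H)
    (B : ℝ → ((Fin 2 → ℂ) →L[ℂ] H))
    (C : ℝ → (H →L[ℂ] (Fin 2 → ℂ)))
    (X Xinv : ℝ → (H →L[ℂ] H))
    (hXinv : ∀ x : ℝ, X x ∘L Xinv x = 1) (hXinv' : ∀ x : ℝ, Xinv x ∘L X x = 1)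
    (hB : ∀ x : ℝ, HasDerivAt B ((-((A ∘L B x) ∘L σ₂ + B x ∘L γ)) ∘L σ₁inv) x)
    (hC : ∀ x : ℝ, HasDerivAt C (σ₁inv ∘L (-(σ₂ ∘L (C x ∘L Aζ)) + γ ∘L C x)) x)
    (hX : ∀ x : ℝ, HasDerivAt X ((B x ∘L σ₂) ∘L C x) x)
    (hLyap : ∀ x : ℝ, A ∘L X x + X x ∘L Aζ + (B x ∘L σ₁) ∘L C x = 0)
    (l : ℂ) (R : H →L[ℂ] H)
    (hR : (l • (1 : H →L[ℂ] H) - A) ∘L R = 1)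
    (hR' : R ∘L (l • (1 : H →L[ℂ] H) - A) = 1) :
    ∃ S' : ℝ → ((Fin 2 → ℂ) →L[ℂ] (Fin 2 → ℂ)),
      (∀ x : ℝ, HasDerivAt (fun z => transferS σ₁ B C Xinv R z) (S' x) x) ∧
      ∀ x : ℝ, S' x =
        σ₁inv ∘L ((l • σ₂ + gammaStar σ₁ σ₂ γ B C Xinv x) ∘L transferS σ₁ B C Xinv R x) -
          transferS σ₁ B C Xinv R x ∘L (σ₁inv ∘L (l • σ₂ + γ)) := by
  refine ⟨fun x => σ₁inv ∘L ((l • σ₂ + gammaStar σ₁ σ₂ γ B C Xinv x) ∘L transferS σ₁ B C Xinv R x)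
      - transferS σ₁ B C Xinv R x ∘L (σ₁inv ∘L (l • σ₂ + γ)), fun x => ?_, fun x => rfl⟩
  have hARe : A ∘L R = l • R - 1 := by
    have h1 : l • R - A ∘L R = 1 := by
      simpa [sub_comp, smul_comp, one_def, id_comp] using hR
    rw [← h1]; abel
  have hRAe : R ∘L A = l • R - 1 := by
    have h1 : l • R - R ∘L A = 1 := by
      simpa [comp_sub, comp_smul, one_def, comp_id] using hR'
    rw [← h1]; abel
  have eAR : ∀ w : (Fin 2 → ℂ) →L[ℂ] H, A ∘L (R ∘L w) = l • (R ∘L w) - w := by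
    intro w; rw [← comp_assoc, hARe, sub_comp, smul_comp]; simp [one_def, id_comp]
  have eRA : ∀ w : (Fin 2 → ℂ) →L[ℂ] H, R ∘L (A ∘L w) = l • (R ∘L w) - w := by
    intro w; rw [← comp_assoc, hRAe, sub_comp, smul_comp]; simp [one_def, id_comp]
  have eσiσ : ∀ w : (Fin 2 → ℂ) →L[ℂ] (Fin 2 → ℂ), σ₁inv ∘L (σ₁ ∘L w) = w := by
    intro w; rw [← comp_assoc, hσ₁inv]; simp [one_def, id_comp]
  have eσσ : ∀ w : (Fin 2 → ℂ) →L[ℂ] (Fin 2 → ℂ), σ₁ ∘L (σ₁inv ∘L w) = w := by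
    intro w; rw [← comp_assoc, hσ₁]; simp [one_def, id_comp]
  -- Lyapunov equation conjugated by `Xinv`
  have eXiX : ∀ w : H →L[ℂ] H, Xinv x ∘L (X x ∘L w) = w := by
    intro w; rw [← comp_assoc, hXinv' x]; simp [one_def, id_comp]
  have hLyC : Xinv x ∘L A + Aζ ∘L Xinv x
      + Xinv x ∘L (B x ∘L (σ₁ ∘L (C x ∘L Xinv x))) = 0 := by
    have h := congrArg (fun T => Xinv x ∘L (T ∘L Xinv x)) (hLyap x)
    simpa [comp_add, add_comp, comp_assoc, hXinv x, eXiX,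
      one_def, comp_id, comp_zero, zero_comp] using h
  have eAζ : ∀ w : (Fin 2 → ℂ) →L[ℂ] H, Aζ ∘L (Xinv x ∘L w)
      = -(Xinv x ∘L (A ∘L w)) - Xinv x ∘L (B x ∘L (σ₁ ∘L (C x ∘L (Xinv x ∘L w)))) := by
    intro w
    have h : Aζ ∘L Xinv x = -(Xinv x ∘L A)
        - Xinv x ∘L (B x ∘L (σ₁ ∘L (C x ∘L Xinv x))) := by
      apply eq_of_sub_eq_zero; rw [← hLyC]; abel
    rw [← comp_assoc, h, sub_comp, neg_comp]
    simp only [comp_assoc]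
  -- derivative of `S` via product rule
  have hB1 : HasDerivAt (fun z => B z ∘L σ₁)
      (((-((A ∘L B x) ∘L σ₂ + B x ∘L γ)) ∘L σ₁inv) ∘L σ₁) x := by
    simpa using aux_comp_deriv (hB x) (hasDerivAt_const x σ₁)
  have hRB : HasDerivAt (fun z => R ∘L (B z ∘L σ₁))
      (R ∘L ((((-((A ∘L B x) ∘L σ₂ + B x ∘L γ)) ∘L σ₁inv) ∘L σ₁))) x := by
    simpa using aux_comp_deriv (hasDerivAt_const x R) hB1
  have hXi : HasDerivAt Xinv (-(Xinv x ∘L (((B x ∘L σ₂) ∘L C x) ∘L Xinv x))) x :=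
    aux_inv_deriv X Xinv hXinv hXinv' (hX x)
  have hXRB : HasDerivAt (fun z => Xinv z ∘L (R ∘L (B z ∘L σ₁)))
      ((-(Xinv x ∘L (((B x ∘L σ₂) ∘L C x) ∘L Xinv x))) ∘L (R ∘L (B x ∘L σ₁))
        + Xinv x ∘L (R ∘L ((((-((A ∘L B x) ∘L σ₂ + B x ∘L γ)) ∘L σ₁inv) ∘L σ₁)))) x :=
    aux_comp_deriv hXi hRB
  have hCX : HasDerivAt (fun z => C z ∘L (Xinv z ∘L (R ∘L (B z ∘L σ₁))))
      ((σ₁inv ∘L (-(σ₂ ∘L (C x ∘L Aζ)) + γ ∘L C x)) ∘L (Xinv x ∘L (R ∘L (B x ∘L σ₁)))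
        + C x ∘L ((-(Xinv x ∘L (((B x ∘L σ₂) ∘L C x) ∘L Xinv x))) ∘L (R ∘L (B x ∘L σ₁))
        + Xinv x ∘L (R ∘L ((((-((A ∘L B x) ∘L σ₂ + B x ∘L γ)) ∘L σ₁inv) ∘L σ₁))))) x :=
    aux_comp_deriv (hC x) hXRB
  have hS : HasDerivAt (fun z => transferS σ₁ B C Xinv R z)
      (0 - ((σ₁inv ∘L (-(σ₂ ∘L (C x ∘L Aζ)) + γ ∘L C x)) ∘L (Xinv x ∘L (R ∘L (B x ∘L σ₁)))
        + C x ∘L ((-(Xinv x ∘L (((B x ∘L σ₂) ∘L C x) ∘L Xinv x))) ∘L (R ∘L (B x ∘L σ₁))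
        + Xinv x ∘L (R ∘L ((((-((A ∘L B x) ∘L σ₂ + B x ∘L γ)) ∘L σ₁inv) ∘L σ₁)))))) x := by
    exact (hasDerivAt_const x
      (1 : (Fin 2 → ℂ) →L[ℂ] (Fin 2 → ℂ))).sub hCX
  convert hS using 1
  -- the algebraic identity
  simp only [transferS, gammaStar, zero_sub, comp_add, add_comp, comp_sub, sub_comp,
    comp_neg, neg_comp, smul_comp, comp_smul, comp_assoc, one_def, id_comp, comp_id,
    hσ₁inv, eσσ, eσiσ, eAζ, eAR, eRA]
  module
end

section
/- Tau-function form of the linkage matrix for Sturm–Liouville parameters: let the inner space be finite dimensional, H = ℂᵏ, and suppose the matrix-valued functions B : ℝ → Hom(ℂ², ℂᵏ), C : ℝ → Hom(ℂᵏ, ℂ²), X : ℝ → Hom(ℂᵏ, ℂᵏ) are differentiable and satisfy, with the Sturm–Liouville vessel parameters, B'(x) = -(A B(x) σ₂ + B(x) γ) σ₁⁻¹, C'(x) = σ₁⁻¹(-σ₂ C(x) A_ζ + γ C(x)), X'(x) = B(x) σ₂ C(x), the Lyapunov equation A X(x) + X(x) A_ζ + B(x) σ₁ C(x) = 0, and X(x)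 is invertible for all x. Set τ(x) := det X(x) and γ*(x) := γ + σ₂ C(x) X(x)⁻¹ B(x) σ₁ − σ₁ C(x) X(x)⁻¹ B(x) σ₂. Then τ(x) ≠ 0, τ is twice differentiable, and γ*(x) = [[i τ''(x)/τ(x), τ'(x)/τ(x)], [−τ'(x)/τ(x), i]] for all x ∈ ℝ. -/
/-- Sturm–Liouville vessel parameter `σ₁ = [[0,1],[1,0]]`. -/
def SLσ₁ : Matrix (Fin 2) (Fin 2) ℂ := !![0, 1; 1, 0]

/-- Sturm–Liouville vessel parameter `σ₂ = [[1,0],[0,0]]`. -/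
def SLσ₂ : Matrix (Fin 2) (Fin 2) ℂ := !![1, 0; 0, 0]

/-- Sturm–Liouville vessel parameter `γ = [[0,0],[0,i]]`. -/
noncomputable def SLγ : Matrix (Fin 2) (Fin 2) ℂ := !![0, 0; 0, Complex.I]

section Aux

attribute [local instance] Matrix.linftyOpNormedAddCommGroup Matrix.linftyOpNormedRing
  Matrix.linftyOpNormedAlgebra Matrix.linftyOpNormedSpace

/-- entrywise derivatives give a matrix-valued derivative -/
theorem SL.ent {k l : ℕ} {X : ℝ → Matrix (Fin k) (Fin l) ℂ} {X'x : Matrix (Fin k) (Fin l) ℂ}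
    {x : ℝ} (hX : ∀ i j, HasDerivAt (fun y => X y i j) (X'x i j) x) :
    HasDerivAt X X'x x := by
  have h : ∀ y : ℝ, X y = ∑ i, ∑ j, (X y i j) • Matrix.single i j (1:ℂ) := by
    intro y
    conv_lhs => rw [Matrix.matrix_eq_sum_single (X y)]
    simp [Matrix.smul_single]
  have h2 : HasDerivAt (fun y => ∑ i, ∑ j, (X y i j) • Matrix.single i j (1:ℂ))
      (∑ i, ∑ j, (X'x i j) • Matrix.single i j (1:ℂ)) x :=
    HasDerivAt.fun_sum fun i _ => HasDerivAt.fun_sum fun j _ => (hX i j).smul_const _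
  have h3 : (∑ i, ∑ j, (X'x i j) • Matrix.single i j (1:ℂ)) = X'x := by
    conv_rhs => rw [Matrix.matrix_eq_sum_single X'x]
    simp [Matrix.smul_single]
  rw [funext h, ← h3]; exact h2

/-- matrix-valued derivative gives entrywise derivatives -/
theorem SL.entback {k l : ℕ} {X : ℝ → Matrix (Fin k) (Fin l) ℂ} {X'x : Matrix (Fin k) (Fin l) ℂ}
    {x : ℝ} (hX : HasDerivAt X X'x x) (i : Fin k) (j : Fin l) :
    HasDerivAt (fun y => X y i j) (X'x i j) x := by
  let clm : Matrix (Fin k) (Fin l) ℂ →L[ℝ] ℂ :=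
    LinearMap.toContinuousLinearMap ((Matrix.entryLinearMap ℂ ℂ i j).restrictScalars ℝ)
  have := clm.hasFDerivAt.comp_hasDerivAt x hX
  exact this

/-- derivative of the matrix inverse along a path -/
theorem SL.invder {k : ℕ} {X : ℝ → Matrix (Fin k) (Fin k) ℂ} {X'x : Matrix (Fin k) (Fin k) ℂ}
    {x : ℝ} (hX : HasDerivAt X X'x x) (hU : IsUnit (X x)) :
    HasDerivAt (fun y => (X y)⁻¹) (-((X x)⁻¹ * X'x * (X x)⁻¹)) x := by
  obtain ⟨u, hu⟩ := hU
  have h1 : HasFDerivAt Ring.inverse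
      (-ContinuousLinearMap.mulLeftRight ℝ _ (↑u⁻¹) (↑u⁻¹)) (X x) := by
    rw [← hu]; exact hasFDerivAt_ringInverse u
  have h2 := h1.comp_hasDerivAt x hX
  have hinv : (↑u⁻¹ : Matrix (Fin k) (Fin k) ℂ) = (X x)⁻¹ := by
    rw [← hu, Matrix.nonsing_inv_eq_ringInverse, Ring.inverse_unit]
  have h3 : (Ring.inverse ∘ X : ℝ → Matrix (Fin k) (Fin k) ℂ) = fun y => (X y)⁻¹ := by
    funext y; simp [Function.comp, Matrix.nonsing_inv_eq_ringInverse]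
  rw [h3] at h2
  simp [hinv] at h2; exact h2

end Aux

/-- entrywise product rule for matrix products -/
theorem SL.mulent {m n p : ℕ} {M : ℝ → Matrix (Fin m) (Fin n) ℂ} {M'x : Matrix (Fin m) (Fin n) ℂ}
    {N : ℝ → Matrix (Fin n) (Fin p) ℂ} {N'x : Matrix (Fin n) (Fin p) ℂ} {x : ℝ}
    (hM : ∀ i j, HasDerivAt (fun y => M y i j) (M'x i j) x)
    (hN : ∀ i j, HasDerivAt (fun y => N y i j) (N'x i j) x) :
    ∀ i j, HasDerivAt (fun y => (M y * N y) i j) ((M'x * N x + M x * N'x) i j) x := by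
  intro i j
  have := HasDerivAt.fun_sum (fun l (_ : l ∈ Finset.univ) => (hM i l).mul (hN l j))
  simpa [Matrix.mul_apply, Matrix.add_apply, Finset.sum_add_distrib] using this

open Matrix in
/-- Jacobi's formula along a path -/
theorem SL.detder {k : ℕ} {X : ℝ → Matrix (Fin k) (Fin k) ℂ} {X'x : Matrix (Fin k) (Fin k) ℂ}
    {x : ℝ} (hX : ∀ i j, HasDerivAt (fun y => X y i j) (X'x i j) x) :
    HasDerivAt (fun y => (X y).det) ((Matrix.adjugate (X x) * X'x).trace) x := by
  have h : HasDerivAt (fun y => ∑ σ : Equiv.Perm (Fin k),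
        (Equiv.Perm.sign σ : ℤ) • ∏ i, X y (σ i) i)
      (∑ σ : Equiv.Perm (Fin k), (Equiv.Perm.sign σ : ℤ) •
        ∑ j, (∏ i ∈ Finset.univ.erase j, X x (σ i) i) • X'x (σ j) j) x :=
    HasDerivAt.fun_sum fun σ _ =>
      (HasDerivAt.fun_finsetProd fun i _ => hX (σ i) i).const_smul _
  have hfun : (fun y => (X y).det) = fun y => ∑ σ : Equiv.Perm (Fin k),
      (Equiv.Perm.sign σ : ℤ) • ∏ i, X y (σ i) i := by
    funext y; rw [Matrix.det_apply]
    exact Finset.sum_congr rfl fun σ _ => by rw [Units.smul_def]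
  rw [hfun]
  convert h using 1
  have step1 : ∀ j : Fin k, ((X x).updateCol j (fun i => X'x i j)).det =
      ∑ σ : Equiv.Perm (Fin k), (Equiv.Perm.sign σ : ℤ) •
        ((∏ i ∈ Finset.univ.erase j, X x (σ i) i) * X'x (σ j) j) := by
    intro j
    rw [Matrix.det_apply]
    refine Finset.sum_congr rfl fun σ _ => ?_
    rw [Units.smul_def]
    congr 1
    rw [← Finset.mul_prod_erase Finset.univ _ (Finset.mem_univ j)]
    rw [Matrix.updateCol_self, mul_comm]
    congr 1
    refine Finset.prod_congr rfl fun i hi => ?_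
    rw [Matrix.updateCol_ne (Finset.ne_of_mem_erase hi)]
  have step2 : (Matrix.adjugate (X x) * X'x).trace =
      ∑ j : Fin k, ((X x).updateCol j (fun i => X'x i j)).det := by
    simp only [← Matrix.cramer_apply, Matrix.cramer_eq_adjugate_mulVec]
    simp [Matrix.trace, Matrix.mul_apply, Matrix.mulVec, dotProduct, Matrix.diag]
  rw [step2]
  simp only [step1]
  rw [Finset.sum_comm]
  refine Finset.sum_congr rfl fun σ _ => ?_
  rw [Finset.smul_sum]
  exact Finset.sum_congr rfl fun j _ => by rw [smul_eq_mul]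

theorem SLσ₁_inv : SLσ₁⁻¹ = SLσ₁ := by
  refine Matrix.inv_eq_right_inv ?_
  ext i j
  fin_cases i <;> fin_cases j <;> simp [SLσ₁, Matrix.mul_apply, Fin.sum_univ_two]

theorem SL.key {k : ℕ} (A Aζ : Matrix (Fin k) (Fin k) ℂ)
    (Bx : Matrix (Fin k) (Fin 2) ℂ) (Cx : Matrix (Fin 2) (Fin k) ℂ)
    (Xx : Matrix (Fin k) (Fin k) ℂ) (hdet : IsUnit Xx.det)
    (hL : A * Xx + Xx * Aζ + Bx * SLσ₁ * Cx = 0) :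
    (((SLσ₁⁻¹ * (-(SLσ₂ * Cx * Aζ) + SLγ * Cx)) * Xx⁻¹ +
        Cx * (-(Xx⁻¹ * (Bx * SLσ₂ * Cx) * Xx⁻¹))) * Bx +
      (Cx * Xx⁻¹) * (-(A * Bx * SLσ₂ + Bx * SLγ) * SLσ₁⁻¹)) 0 0 =
    Complex.I * (Cx * Xx⁻¹ * Bx) 1 0 - (Cx * Xx⁻¹ * Bx) 0 0 * (Cx * Xx⁻¹ * Bx) 0 0
      - Complex.I * (Cx * Xx⁻¹ * Bx) 0 1 := by
  have hYX : Xx⁻¹ * Xx = 1 := Matrix.nonsing_inv_mul _ hdet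
  have hXY : Xx * Xx⁻¹ = 1 := Matrix.mul_nonsing_inv _ hdet
  set W : Matrix (Fin 2) (Fin 2) ℂ := Cx * Xx⁻¹ * Bx with hW
  set M : Matrix (Fin 2) (Fin 2) ℂ := Cx * (Xx⁻¹ * (A * Bx)) with hM
  have hWassoc : Cx * (Xx⁻¹ * (Bx * (SLσ₁ * (Cx * (Xx⁻¹ * Bx))))) = W * SLσ₁ * W := by
    simp only [hW, Matrix.mul_assoc]
  -- Lyapunov consequence
  have R1 : Cx * (Aζ * (Xx⁻¹ * Bx)) = -M - W * SLσ₁ * W := by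
    have hL' : A * Xx + Xx * Aζ = -(Bx * SLσ₁ * Cx) := by
      rw [eq_neg_iff_add_eq_zero]; exact hL
    have h2 := congrArg (fun Z => Cx * Xx⁻¹ * Z * (Xx⁻¹ * Bx)) hL'
    simp only [Matrix.mul_add, Matrix.add_mul, Matrix.mul_neg, Matrix.neg_mul,
      Matrix.mul_assoc] at h2
    rw [show Xx * (Xx⁻¹ * Bx) = Bx by rw [← Matrix.mul_assoc, hXY, Matrix.one_mul]] at h2
    rw [show Xx⁻¹ * (Xx * (Aζ * (Xx⁻¹ * Bx))) = Aζ * (Xx⁻¹ * Bx) by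
      rw [← Matrix.mul_assoc, hYX, Matrix.one_mul]] at h2
    rw [hWassoc, ← hM] at h2
    have h3 := eq_sub_of_add_eq' h2
    rw [h3]; abel
  -- rearrangement
  have E : ((SLσ₁⁻¹ * (-(SLσ₂ * Cx * Aζ) + SLγ * Cx)) * Xx⁻¹ +
        Cx * (-(Xx⁻¹ * (Bx * SLσ₂ * Cx) * Xx⁻¹))) * Bx +
      (Cx * Xx⁻¹) * (-(A * Bx * SLσ₂ + Bx * SLγ) * SLσ₁⁻¹) =
      SLσ₁ * (SLσ₂ * M + SLσ₂ * (W * SLσ₁ * W) + SLγ * W) - W * SLσ₂ * W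
        - (M * SLσ₂ + W * SLγ) * SLσ₁ := by
    rw [SLσ₁_inv]
    simp only [Matrix.mul_add, Matrix.add_mul, Matrix.mul_neg, Matrix.neg_mul,
      Matrix.mul_sub, Matrix.sub_mul, Matrix.mul_assoc, hW, hM]
    rw [R1]
    simp only [Matrix.mul_add, Matrix.add_mul, Matrix.mul_neg, Matrix.neg_mul,
      Matrix.mul_sub, Matrix.sub_mul, Matrix.mul_assoc, hW, hM]
    abel
  rw [E]
  simp only [Matrix.sub_apply, Matrix.add_apply, Matrix.mul_apply, Fin.sum_univ_two,
    SLσ₁, SLσ₂, SLγ, Matrix.cons_val', Matrix.cons_val_zero, Matrix.cons_val_one,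
    Matrix.head_cons, Matrix.empty_val', Matrix.cons_val_fin_one, Matrix.head_fin_const,
    Matrix.of_apply]
  ring


/-- **Tau-function form of the linkage matrix for Sturm–Liouville parameters**
(finite-dimensional inner space `ℂᵏ`): with `τ = det X`,
`γ* = [[i τ''/τ, τ'/τ], [-τ'/τ, i]]`. -/
theorem sl_linkage_tau_form (k : ℕ)
    (A Aζ : Matrix (Fin k) (Fin k) ℂ)
    (B : ℝ → Matrix (Fin k) (Fin 2) ℂ) (B' : ℝ → Matrix (Fin k) (Fin 2) ℂ)
    (C : ℝ → Matrix (Fin 2) (Fin k) ℂ) (C' : ℝ → Matrix (Fin 2) (Fin k) ℂ)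
    (X : ℝ → Matrix (Fin k) (Fin k) ℂ) (X' : ℝ → Matrix (Fin k) (Fin k) ℂ)
    (hB : ∀ (x : ℝ) (i : Fin k) (j : Fin 2),
      HasDerivAt (fun y => B y i j) (B' x i j) x)
    (hC : ∀ (x : ℝ) (i : Fin 2) (j : Fin k),
      HasDerivAt (fun y => C y i j) (C' x i j) x)
    (hX : ∀ (x : ℝ) (i j : Fin k),
      HasDerivAt (fun y => X y i j) (X' x i j) x)
    (hBeq : ∀ x : ℝ, B' x = -(A * B x * SLσ₂ + B x * SLγ) * SLσ₁⁻¹)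
    (hCeq : ∀ x : ℝ, C' x = SLσ₁⁻¹ * (-(SLσ₂ * C x * Aζ) + SLγ * C x))
    (hXeq : ∀ x : ℝ, X' x = B x * SLσ₂ * C x)
    (hLyap : ∀ x : ℝ, A * X x + X x * Aζ + B x * SLσ₁ * C x = 0)
    (hXinv : ∀ x : ℝ, IsUnit (X x)) :
    (∀ x : ℝ, (X x).det ≠ 0) ∧
    ∃ τ' τ'' : ℝ → ℂ,
      (∀ x : ℝ, HasDerivAt (fun y => (X y).det) (τ' x) x) ∧
      (∀ x : ℝ, HasDerivAt τ' (τ'' x) x) ∧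
      ∀ x : ℝ,
        SLγ + SLσ₂ * (C x * (X x)⁻¹ * B x) * SLσ₁ - SLσ₁ * (C x * (X x)⁻¹ * B x) * SLσ₂ =
          !![Complex.I * τ'' x / (X x).det, τ' x / (X x).det;
             -(τ' x / (X x).det), Complex.I] := by
  have hdetU : ∀ x, IsUnit (X x).det := fun x => (Matrix.isUnit_iff_isUnit_det _).mp (hXinv x)
  have hdet0 : ∀ x, (X x).det ≠ 0 := fun x => (hdetU x).ne_zero
  have hY : ∀ (x : ℝ) (i j : Fin k), HasDerivAt (fun y => (X y)⁻¹ i j)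
      ((-((X x)⁻¹ * X' x * (X x)⁻¹)) i j) x :=
    fun x => SL.entback (SL.invder (SL.ent (hX x)) (hXinv x))
  have hW : ∀ (x : ℝ) (i j : Fin 2), HasDerivAt (fun y => (C y * (X y)⁻¹ * B y) i j)
      (((C' x * (X x)⁻¹ + C x * -((X x)⁻¹ * X' x * (X x)⁻¹)) * B x
        + (C x * (X x)⁻¹) * B' x) i j) x :=
    fun x => SL.mulent (SL.mulent (hC x) (hY x)) (hB x)
  have hadj : ∀ x : ℝ, (X x).adjugate = (X x).det • (X x)⁻¹ := fun x => by
    rw [Matrix.inv_def, smul_smul, Ring.mul_inverse_cancel _ (hdetU x), one_smul]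
  have htrace : ∀ x : ℝ, ((X x).adjugate * X' x).trace =
      (X x).det * (C x * (X x)⁻¹ * B x) 0 0 := fun x => by
    rw [hadj x, Matrix.smul_mul, Matrix.trace_smul, hXeq x, smul_eq_mul]
    congr 1
    rw [show (X x)⁻¹ * (B x * SLσ₂ * C x) = ((X x)⁻¹ * (B x * SLσ₂)) * C x by
      simp only [Matrix.mul_assoc]]
    rw [Matrix.trace_mul_comm]
    rw [show C x * ((X x)⁻¹ * (B x * SLσ₂)) = (C x * (X x)⁻¹ * B x) * SLσ₂ by
      simp only [Matrix.mul_assoc]]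
    simp [Matrix.trace, Matrix.diag, Matrix.mul_apply, Fin.sum_univ_two, SLσ₂]
  have hτ'der : ∀ x : ℝ, HasDerivAt (fun y => (X y).det)
      ((X x).det * (C x * (X x)⁻¹ * B x) 0 0) x := fun x => htrace x ▸ SL.detder (hX x)
  have hkey : ∀ x : ℝ, ((C' x * (X x)⁻¹ + C x * -((X x)⁻¹ * X' x * (X x)⁻¹)) * B x
        + (C x * (X x)⁻¹) * B' x) 0 0 =
      Complex.I * (C x * (X x)⁻¹ * B x) 1 0
        - (C x * (X x)⁻¹ * B x) 0 0 * (C x * (X x)⁻¹ * B x) 0 0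
        - Complex.I * (C x * (X x)⁻¹ * B x) 0 1 := fun x => by
    rw [hCeq x, hBeq x, hXeq x]
    exact SL.key A Aζ (B x) (C x) (X x) (hdetU x) (hLyap x)
  refine ⟨hdet0, fun x => (X x).det * (C x * (X x)⁻¹ * B x) 0 0,
    fun x => Complex.I * ((X x).det *
      ((C x * (X x)⁻¹ * B x) 1 0 - (C x * (X x)⁻¹ * B x) 0 1)),
    hτ'der, fun x => ?_, fun x => ?_⟩
  · have h := (hτ'der x).fun_mul (hW x 0 0)
    refine h.congr_deriv ?_
    rw [hkey x]
    ring
  · have hd0 := hdet0 x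
    beta_reduce
    generalize hG : C x * (X x)⁻¹ * B x = G
    generalize hd : (X x).det = d
    rw [hd] at hd0
    ext i j
    fin_cases i <;> fin_cases j <;>
      simp only [Fin.mk_zero, Fin.mk_one, Fin.isValue, Matrix.sub_apply, Matrix.add_apply,
        Matrix.mul_apply, Fin.sum_univ_two, SLσ₁, SLσ₂, SLγ, Matrix.cons_val',
        Matrix.cons_val_zero, Matrix.cons_val_one, Matrix.head_cons, Matrix.empty_val',
        Matrix.cons_val_fin_one, Matrix.head_fin_const, Matrix.of_apply]
    · rw [mul_div_assoc, mul_div_assoc]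
      rw [mul_div_cancel_left₀ _ hd0]
      linear_combination (G 0 1 - G 1 0) * Complex.I_sq
    · rw [mul_div_cancel_left₀ _ hd0]; ring
    · rw [mul_div_cancel_left₀ _ hd0]; ring
    · ring
end

section
/- Output compatibility equivalence for Sturm–Liouville parameters: let τ : ℝ → ℂ be twice differentiable with τ(x) ≠ 0 for all x, assume τ'/τ is differentiable, and set γ*(x) := [[i τ''(x)/τ(x), τ'(x)/τ(x)], [−τ'(x)/τ(x), i]]. Let λ ∈ ℂ and y = (y₁, y₂) : ℝ → ℂ² be differentiable. Then λ σ₂ y(x) − σ₁ y'(x) + γ*(x) y(x) = 0 for all x ∈ ℝ if and only if y₂ = −i (y₁' + (τ'/τ) y₁), y₁ is twice differentiable, and −y₁''(x) − 2 (d²/dx²)[log τ](x) · y₁(x) = −iλ y₁(x) for all x, where (d²/dx²)[log τ] = (τ'/τ)' denotes the derivative of τ'/τ. -/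
/-- **Output compatibility equivalence for Sturm–Liouville parameters:**
with `γ*(x) = [[i τ''/τ, τ'/τ],[-τ'/τ, i]]`, the output ODE
`λ σ₂ y - σ₁ y' + γ* y = 0` holds iff `y₂ = -i (y₁' + (τ'/τ) y₁)`, `y₁` is
twice differentiable and `-y₁'' - 2 (τ'/τ)' y₁ = -iλ y₁`. -/
theorem sl_output_compatibility_equiv
    (τ τ' τ'' Lτ : ℝ → ℂ)
    (hτ : ∀ x : ℝ, HasDerivAt τ (τ' x) x)
    (hτ' : ∀ x : ℝ, HasDerivAt τ' (τ'' x) x)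
    (hτ0 : ∀ x : ℝ, τ x ≠ 0)
    (hLτ : ∀ x : ℝ, HasDerivAt (fun y => τ' y / τ y) (Lτ x) x)
    (l : ℂ) (y y' : ℝ → (Fin 2 → ℂ))
    (hy : ∀ x : ℝ, HasDerivAt y (y' x) x) :
    (∀ x : ℝ,
        l • SLσ₂.mulVec (y x) - SLσ₁.mulVec (y' x) +
          (!![Complex.I * τ'' x / τ x, τ' x / τ x;
              -(τ' x / τ x), Complex.I] : Matrix (Fin 2) (Fin 2) ℂ).mulVec (y x) = 0) ↔
      ((∀ x : ℝ, y x 1 = -Complex.I * (y' x 0 + (τ' x / τ x) * y x 0)) ∧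
        ∃ w : ℝ → ℂ, (∀ x : ℝ, HasDerivAt (fun s => y' s 0) (w x) x) ∧
          ∀ x : ℝ, -w x - 2 * Lτ x * y x 0 = -Complex.I * l * y x 0) := by
  have h0 : ∀ x : ℝ, HasDerivAt (fun s => y s 0) (y' x 0) x :=
    fun x => hasDerivAt_pi.1 (hy x) 0
  have h1 : ∀ x : ℝ, HasDerivAt (fun s => y s 1) (y' x 1) x :=
    fun x => hasDerivAt_pi.1 (hy x) 1
  have hL : ∀ x : ℝ, Lτ x = τ'' x / τ x - (τ' x / τ x) ^ 2 := by
    intro x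
    have h2 := (hτ' x).div (hτ x) (hτ0 x)
    have heq := (hLτ x).unique h2
    rw [heq]
    field_simp [hτ0 x]
  have hode : ∀ x : ℝ,
      (l • SLσ₂.mulVec (y x) - SLσ₁.mulVec (y' x) +
        (!![Complex.I * τ'' x / τ x, τ' x / τ x;
            -(τ' x / τ x), Complex.I] : Matrix (Fin 2) (Fin 2) ℂ).mulVec (y x) = 0)
      ↔ (l * y x 0 - y' x 1 + (Complex.I * τ'' x / τ x * y x 0 + τ' x / τ x * y x 1) = 0 ∧
         -(y' x 0) + (-(τ' x / τ x) * y x 0 + Complex.I * y x 1) = 0) := by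
    intro x
    rw [funext_iff, Fin.forall_fin_two]
    constructor
    · rintro ⟨a, b⟩
      simp [SLσ₁, SLσ₂, Matrix.mulVec, dotProduct, Fin.sum_univ_two] at a b
      exact ⟨by linear_combination a, by linear_combination b⟩
    · rintro ⟨a, b⟩
      simp [SLσ₁, SLσ₂, Matrix.mulVec, dotProduct, Fin.sum_univ_two]
      exact ⟨by linear_combination a, by linear_combination b⟩
  constructor
  · intro h
    have e0 : ∀ x, l * y x 0 - y' x 1 + (Complex.I * τ'' x / τ x * y x 0 + τ' x / τ x * y x 1) = 0 :=
      fun x => ((hode x).1 (h x)).1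
    have e1 : ∀ x, y x 1 = -Complex.I * (y' x 0 + (τ' x / τ x) * y x 0) := by
      intro x
      have b := ((hode x).1 (h x)).2
      linear_combination -Complex.I * b + y x 1 * Complex.I_sq
    have key : ∀ s : ℝ, y' s 0 = Complex.I * y s 1 - (τ' s / τ s) * y s 0 := by
      intro s
      linear_combination -Complex.I * (e1 s) + (y' s 0 + τ' s / τ s * y s 0) * Complex.I_sq
    refine ⟨e1, fun x => Complex.I * y' x 1 - Lτ x * y x 0 - (τ' x / τ x) * y' x 0, ?_, ?_⟩
    · intro x
      have hd : HasDerivAt (fun s => Complex.I * y s 1 - (τ' s / τ s) * y s 0)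
          (Complex.I * y' x 1 - (Lτ x * y x 0 + (τ' x / τ x) * y' x 0)) x :=
        ((h1 x).const_mul Complex.I).sub ((hLτ x).mul (h0 x))
      have hd2 := hd.congr_of_eventuallyEq (Filter.Eventually.of_forall fun s => key s)
      refine hd2.congr_deriv ?_
      beta_reduce
      ring
    · intro x
      linear_combination Complex.I * e0 x - (τ' x / τ x) * Complex.I * e1 x - y x 0 * hL x +
        (-(τ'' x / τ x) * y x 0 + (τ' x / τ x) * (y' x 0 + (τ' x / τ x) * y x 0)) * Complex.I_sq
  · rintro ⟨e1, w, hw, hweq⟩ x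
    rw [hode x]
    constructor
    · have hd : HasDerivAt (fun s => -Complex.I * (y' s 0 + (τ' s / τ s) * y s 0))
          (-Complex.I * (w x + (Lτ x * y x 0 + (τ' x / τ x) * y' x 0))) x :=
        ((hw x).add ((hLτ x).mul (h0 x))).const_mul (-Complex.I)
      have hy1 : y' x 1 = -Complex.I * (w x + (Lτ x * y x 0 + (τ' x / τ x) * y' x 0)) :=
        (h1 x).unique (hd.congr_of_eventuallyEq (Filter.Eventually.of_forall fun s => e1 s))
      linear_combination -hy1 - Complex.I * hweq x + l * y x 0 * Complex.I_sq -
        Complex.I * y x 0 * hL x + (τ' x / τ x) * e1 x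
    · linear_combination Complex.I * e1 x - (y' x 0 + (τ' x / τ x) * y x 0) * Complex.I_sq
end

section
/- Entrywise moment recursion for Sturm–Liouville parameters: let β : ℝ → ℂ be differentiable, π₁₁ := β' − β², and γ*(x) := [[−i π₁₁(x), −β(x)], [β(x), i]]. Suppose H_n : ℝ → M₂(ℂ) (n ∈ ℕ) are differentiable and satisfy, for all n and x, H_n'(x) = σ₁⁻¹σ₂ H_{n+1}(x) − H_{n+1}(x) σ₂σ₁⁻¹ + σ₁⁻¹γ*(x) H_n(x) − H_n(x) γ σ₁⁻¹, with the Sturm–Liouville parameters. Write H_n = [[H_n¹¹, H_n¹²],[H_n²¹, H_n²²]]. Then for all n and all x: (i) H_{n+1}¹¹ = i H_n²² − (H_n¹²)' + β H_n¹²; (ii) H_n¹² − H_n²¹ = i ((H_n¹¹)' − β H_n¹¹); (iii) (H_n¹² + H_n²¹)' = −i π₁₁ H_n¹¹ + β (H_n¹² − H_n²¹); and (iv) (H_n¹²)' is differentiable and 2i (H_n²²)' = (H_n¹²)'' − 2β (H_n¹²)'. -/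
/-- **Entrywise moment recursion for Sturm–Liouville parameters:** if the
moments satisfy `Hₙ' = σ₁⁻¹σ₂ Hₙ₊₁ - Hₙ₊₁ σ₂σ₁⁻¹ + σ₁⁻¹γ* Hₙ - Hₙ γ σ₁⁻¹`
with `γ* = [[-iπ₁₁, -β],[β, i]]`, `π₁₁ = β' - β²`, then the four entrywise
identities hold. -/
theorem sl_moment_recursion_entrywise
    (β β' : ℝ → ℂ)
    (hβ : ∀ x : ℝ, HasDerivAt β (β' x) x)
    (H H' : ℕ → ℝ → Matrix (Fin 2) (Fin 2) ℂ)
    (hH : ∀ (n : ℕ) (x : ℝ) (i j : Fin 2),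
      HasDerivAt (fun y => H n y i j) (H' n x i j) x)
    (hrec : ∀ (n : ℕ) (x : ℝ),
      H' n x = SLσ₁⁻¹ * SLσ₂ * H (n + 1) x - H (n + 1) x * SLσ₂ * SLσ₁⁻¹ +
        SLσ₁⁻¹ * !![-Complex.I * (β' x - β x ^ 2), -β x;
                     β x, Complex.I] * H n x - H n x * SLγ * SLσ₁⁻¹) :
    ∀ (n : ℕ) (x : ℝ),
      (H (n + 1) x 0 0 = Complex.I * H n x 1 1 - H' n x 0 1 + β x * H n x 0 1) ∧
      (H n x 0 1 - H n x 1 0 = Complex.I * (H' n x 0 0 - β x * H n x 0 0)) ∧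
      (H' n x 0 1 + H' n x 1 0 =
        -Complex.I * (β' x - β x ^ 2) * H n x 0 0 + β x * (H n x 0 1 - H n x 1 0)) ∧
      (∃ w : ℝ → ℂ, (∀ y : ℝ, HasDerivAt (fun z => H' n z 0 1) (w y) y) ∧
        ∀ y : ℝ, 2 * Complex.I * H' n y 1 1 = w y - 2 * β y * H' n y 0 1) := by
  have hinv : (!![0,1;1,0] : Matrix (Fin 2) (Fin 2) ℂ)⁻¹ = !![0,1;1,0] :=
    Matrix.inv_eq_right_inv (by simp [Matrix.mul_fin_two, Matrix.one_fin_two])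
  have e00 : ∀ n x, H' n x 0 0 = β x * H n x 0 0 + Complex.I * H n x 1 0
      - Complex.I * H n x 0 1 := by
    intro n x
    have h := congrFun (congrFun (hrec n x) 0) 0
    simp [SLσ₁, SLσ₂, SLγ, hinv, Matrix.mul_apply, Matrix.vecMul,
      dotProduct, Fin.sum_univ_two] at h
    linear_combination h
  have e01 : ∀ n x, H' n x 0 1 = -H (n+1) x 0 0 + β x * H n x 0 1
      + Complex.I * H n x 1 1 := by
    intro n x
    have h := congrFun (congrFun (hrec n x) 0) 1
    simp [SLσ₁, SLσ₂, SLγ, hinv, Matrix.mul_apply, Matrix.vecMul,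
      dotProduct, Fin.sum_univ_two] at h
    linear_combination h
  have e10 : ∀ n x, H' n x 1 0 = H (n+1) x 0 0
      - Complex.I * (β' x - β x ^ 2) * H n x 0 0 - β x * H n x 1 0
      - Complex.I * H n x 1 1 := by
    intro n x
    have h := congrFun (congrFun (hrec n x) 1) 0
    simp [SLσ₁, SLσ₂, SLγ, hinv, Matrix.mul_apply, Matrix.vecMul,
      dotProduct, Fin.sum_univ_two] at h
    linear_combination h
  have e11 : ∀ n x, H' n x 1 1 = H (n+1) x 0 1 - H (n+1) x 1 0
      - Complex.I * (β' x - β x ^ 2) * H n x 0 1 - β x * H n x 1 1 := by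
    intro n x
    have h := congrFun (congrFun (hrec n x) 1) 1
    simp [SLσ₁, SLσ₂, SLγ, hinv, Matrix.mul_apply, Matrix.vecMul,
      dotProduct, Fin.sum_univ_two] at h
    linear_combination h
  intro n x
  refine ⟨by linear_combination e01 n x, ?_, ?_, ?_⟩
  · linear_combination (-Complex.I) * e00 n x
      + (H n x 0 1 - H n x 1 0) * Complex.I_sq
  · linear_combination e01 n x + e10 n x
  · refine ⟨fun y => -(H' (n+1) y 0 0) + (β' y * H n y 0 1 + β y * H' n y 0 1)
      + Complex.I * H' n y 1 1, fun y => ?_, fun y => ?_⟩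
    · have hfun : (fun z => H' n z 0 1)
          = fun z => -H (n+1) z 0 0 + β z * H n z 0 1 + Complex.I * H n z 1 1 :=
        funext fun z => e01 n z
      rw [hfun]
      exact (((hH (n+1) y 0 0).neg.add ((hβ y).mul (hH n y 0 1))).add
        ((hH n y 1 1).const_mul Complex.I))
    · linear_combination Complex.I * e11 n y + e00 (n+1) y + β y * e01 n y
        - (β' y - β y ^ 2) * H n y 0 1 * Complex.I_sq
end

section
/- Uniqueness of the moments: let σ₁, σ₂, γ be 2×2 complex matrices with σ₁ invertible. Suppose H_n, H̃_n : ℝ → M₂(ℂ) (n ∈ ℕ) are differentiable for every n, that H₀ and H̃₀ are real-analytic on ℝ, and that with γ*(x) := γ + σ₂ H₀(x) σ₁ − σ₁ H₀(x) σ₂ and γ̃*(x) := γ + σ₂ H̃₀(x) σ₁ − σ₁ H̃₀(x) σ₂ the recursions H_n'(x) = σ₁⁻¹σ₂ H_{n+1}(x) − H_{n+1}(x) σ₂σ₁⁻¹ + σ₁⁻¹γ*(x) H_n(x) − H_n(x) γ σ₁⁻¹ and H̃_n'(x) = σ₁⁻¹σ₂ H̃_{n+1}(x) − H̃_{n+1}(x)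 σ₂σ₁⁻¹ + σ₁⁻¹γ̃*(x) H̃_n(x) − H̃_n(x) γ σ₁⁻¹ hold for all n and x. If H_n(0) = H̃_n(0) for every n ∈ ℕ, then H₀(x) = H̃₀(x) for all x ∈ ℝ, and consequently γ*(x) = γ̃*(x) for all x ∈ ℝ. -/
open scoped Topology ContDiff

private lemma natCast_le_infty' (m : ℕ) : (m : WithTop ℕ∞) ≤ ∞ := by exact_mod_cast le_top

private lemma itd_add {m : ℕ} {f g : ℝ → ℂ} (hf : ContDiff ℝ ∞ f) (hg : ContDiff ℝ ∞ g) :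
    iteratedDeriv m (fun x => f x + g x) 0 = iteratedDeriv m f 0 + iteratedDeriv m g 0 := by
  have := iteratedDerivWithin_add (Set.mem_univ (0:ℝ)) uniqueDiffOn_univ
    (f := f) (g := g) (n := m)
    ((hf.of_le (natCast_le_infty' m)).contDiffWithinAt) ((hg.of_le (natCast_le_infty' m)).contDiffWithinAt)
  simp only [iteratedDerivWithin_univ] at this
  exact this

private lemma itd_sub {m : ℕ} {f g : ℝ → ℂ} (hf : ContDiff ℝ ∞ f) (hg : ContDiff ℝ ∞ g) :
    iteratedDeriv m (fun x => f x - g x) 0 = iteratedDeriv m f 0 - iteratedDeriv m g 0 := by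
  have := iteratedDerivWithin_sub (Set.mem_univ (0:ℝ)) uniqueDiffOn_univ
    (f := f) (g := g) (n := m)
    ((hf.of_le (natCast_le_infty' m)).contDiffWithinAt) ((hg.of_le (natCast_le_infty' m)).contDiffWithinAt)
  simp only [iteratedDerivWithin_univ] at this
  exact this

private lemma itd_mul_congr : ∀ (k : ℕ) (f g f' g' : ℝ → ℂ),
    ContDiff ℝ ∞ f → ContDiff ℝ ∞ g → ContDiff ℝ ∞ f' → ContDiff ℝ ∞ g' →
    (∀ m ≤ k, iteratedDeriv m f 0 = iteratedDeriv m f' 0) →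
    (∀ m ≤ k, iteratedDeriv m g 0 = iteratedDeriv m g' 0) →
    iteratedDeriv k (fun x => f x * g x) 0 = iteratedDeriv k (fun x => f' x * g' x) 0 := by
  intro k
  induction k with
  | zero =>
    intro f g f' g' _ _ _ _ h1 h2
    simpa [iteratedDeriv_zero] using by
      rw [show f 0 = f' 0 by simpa [iteratedDeriv_zero] using h1 0 le_rfl,
          show g 0 = g' 0 by simpa [iteratedDeriv_zero] using h2 0 le_rfl]
  | succ k ih =>
    intro f g f' g' hf hg hf' hg' h1 h2
    have hdmul : ∀ (u v : ℝ → ℂ), ContDiff ℝ ∞ u → ContDiff ℝ ∞ v →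
        deriv (fun x => u x * v x) = fun x => deriv u x * v x + u x * deriv v x := by
      intro u v hu hv
      funext x
      exact deriv_mul ((contDiff_infty_iff_deriv.mp hu).1 x) ((contDiff_infty_iff_deriv.mp hv).1 x)
    have hfd := (contDiff_infty_iff_deriv.mp hf).2
    have hgd := (contDiff_infty_iff_deriv.mp hg).2
    have hfd' := (contDiff_infty_iff_deriv.mp hf').2
    have hgd' := (contDiff_infty_iff_deriv.mp hg').2
    rw [iteratedDeriv_succ', iteratedDeriv_succ', hdmul f g hf hg, hdmul f' g' hf' hg',
      itd_add ((hfd.mul hg)) (hf.mul hgd), itd_add ((hfd'.mul hg')) (hf'.mul hgd')]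
    have e1 : iteratedDeriv k (fun x => deriv f x * g x) 0
        = iteratedDeriv k (fun x => deriv f' x * g' x) 0 := by
      refine ih _ _ _ _ hfd hg hfd' hg' (fun m hm => ?_) (fun m hm => h2 m (hm.trans k.le_succ))
      rw [← iteratedDeriv_succ', ← iteratedDeriv_succ']
      exact h1 (m+1) (Nat.succ_le_succ hm)
    have e2 : iteratedDeriv k (fun x => f x * deriv g x) 0
        = iteratedDeriv k (fun x => f' x * deriv g' x) 0 := by
      refine ih _ _ _ _ hf hgd hf' hgd' (fun m hm => h1 m (hm.trans k.le_succ)) (fun m hm => ?_)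
      rw [← iteratedDeriv_succ', ← iteratedDeriv_succ']
      exact h2 (m+1) (Nat.succ_le_succ hm)
    rw [e1, e2]

private lemma ev_zero_of_itd_zero {f : ℝ → ℂ} (hf : AnalyticAt ℝ f 0)
    (h : ∀ k, iteratedDeriv k f 0 = 0) : f =ᶠ[nhds (0:ℝ)] 0 := by
  obtain ⟨p, r, hp⟩ := hf
  filter_upwards [EMetric.ball_mem_nhds (0:ℝ) hp.r_pos] with y hy
  have hs := hp.hasSum_iteratedFDeriv (y := y) (by simpa using hy)
  have hz : ∀ n : ℕ, ((n.factorial : ℝ)⁻¹ • iteratedFDeriv ℝ n f 0 fun _ ↦ y) = 0 := by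
    intro n
    have e1 : (iteratedFDeriv ℝ n f 0 fun _ ↦ y)
        = (∏ _i : Fin n, y) • iteratedFDeriv ℝ n f 0 (fun _ ↦ (1:ℝ)) := by
      rw [← ContinuousMultilinearMap.map_smul_univ]
      congr 1
      funext i
      simp
    rw [e1, ← iteratedDeriv_eq_iteratedFDeriv, h n, smul_zero, smul_zero]
  have : f (0 + y) = 0 := hs.unique (by simpa [hz] using hasSum_zero)
  simpa using this

/-- entrywise smoothness of a matrix-valued function -/
private def MSN (N : WithTop ℕ∞) (F : ℝ → Matrix (Fin 2) (Fin 2) ℂ) : Prop :=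
  ∀ i j, ContDiff ℝ N (fun x => F x i j)

/-- entrywise agreement of iterated derivatives at 0 up to order k -/
private def MA (k : ℕ) (F G : ℝ → Matrix (Fin 2) (Fin 2) ℂ) : Prop :=
  ∀ m ≤ k, ∀ i j,
    iteratedDeriv m (fun x => F x i j) 0 = iteratedDeriv m (fun x => G x i j) 0

private lemma MSN_const (N : WithTop ℕ∞) (A : Matrix (Fin 2) (Fin 2) ℂ) :
    MSN N (fun _ => A) := fun _ _ => contDiff_const

private lemma MSN.add {N F G} (hF : MSN N F) (hG : MSN N G) :
    MSN N (fun x => F x + G x) := by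
  intro i j
  have : (fun x => (F x + G x) i j) = fun x => F x i j + G x i j := by
    funext x; simp [Matrix.add_apply]
  rw [this]; exact (hF i j).add (hG i j)

private lemma MSN.sub {N F G} (hF : MSN N F) (hG : MSN N G) :
    MSN N (fun x => F x - G x) := by
  intro i j
  have : (fun x => (F x - G x) i j) = fun x => F x i j - G x i j := by
    funext x; simp [Matrix.sub_apply]
  rw [this]; exact (hF i j).sub (hG i j)

private lemma MSN.mul {N F G} (hF : MSN N F) (hG : MSN N G) :
    MSN N (fun x => F x * G x) := by
  intro i j
  have : (fun x => (F x * G x) i j)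
      = fun x => F x i 0 * G x 0 j + F x i 1 * G x 1 j := by
    funext x; simp [Matrix.mul_apply, Fin.sum_univ_two]
  rw [this]
  exact ((hF i 0).mul (hG 0 j)).add ((hF i 1).mul (hG 1 j))

private lemma MA_const (k : ℕ) (A : Matrix (Fin 2) (Fin 2) ℂ) :
    MA k (fun _ => A) (fun _ => A) := fun _ _ _ _ => rfl

private lemma MA.add {k F G F' G'} (h1 : MA k F F') (h2 : MA k G G')
    (hF : MSN ∞ F) (hG : MSN ∞ G) (hF' : MSN ∞ F') (hG' : MSN ∞ G') :
    MA k (fun x => F x + G x) (fun x => F' x + G' x) := by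
  intro m hm i j
  have e : ∀ (P Q : ℝ → Matrix (Fin 2) (Fin 2) ℂ),
      (fun x => (P x + Q x) i j) = fun x => P x i j + Q x i j := by
    intro P Q; funext x; simp [Matrix.add_apply]
  rw [e F G, e F' G', itd_add (hF i j) (hG i j), itd_add (hF' i j) (hG' i j),
    h1 m hm i j, h2 m hm i j]

private lemma MA.sub {k F G F' G'} (h1 : MA k F F') (h2 : MA k G G')
    (hF : MSN ∞ F) (hG : MSN ∞ G) (hF' : MSN ∞ F') (hG' : MSN ∞ G') :
    MA k (fun x => F x - G x) (fun x => F' x - G' x) := by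
  intro m hm i j
  have e : ∀ (P Q : ℝ → Matrix (Fin 2) (Fin 2) ℂ),
      (fun x => (P x - Q x) i j) = fun x => P x i j - Q x i j := by
    intro P Q; funext x; simp [Matrix.sub_apply]
  rw [e F G, e F' G', itd_sub (hF i j) (hG i j), itd_sub (hF' i j) (hG' i j),
    h1 m hm i j, h2 m hm i j]

private lemma MA.mul {k F G F' G'} (h1 : MA k F F') (h2 : MA k G G')
    (hF : MSN ∞ F) (hG : MSN ∞ G) (hF' : MSN ∞ F') (hG' : MSN ∞ G') :
    MA k (fun x => F x * G x) (fun x => F' x * G' x) := by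
  intro m hm i j
  have e : ∀ (P Q : ℝ → Matrix (Fin 2) (Fin 2) ℂ),
      (fun x => (P x * Q x) i j)
        = fun x => P x i 0 * Q x 0 j + P x i 1 * Q x 1 j := by
    intro P Q; funext x; simp [Matrix.mul_apply, Fin.sum_univ_two]
  rw [e F G, e F' G',
    itd_add ((hF i 0).mul (hG 0 j)) ((hF i 1).mul (hG 1 j)),
    itd_add ((hF' i 0).mul (hG' 0 j)) ((hF' i 1).mul (hG' 1 j)),
    itd_mul_congr m _ _ _ _ (hF i 0) (hG 0 j) (hF' i 0) (hG' 0 j)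
      (fun m' hm' => h1 m' (hm'.trans hm) i 0) (fun m' hm' => h2 m' (hm'.trans hm) 0 j),
    itd_mul_congr m _ _ _ _ (hF i 1) (hG 1 j) (hF' i 1) (hG' 1 j)
      (fun m' hm' => h1 m' (hm'.trans hm) i 1) (fun m' hm' => h2 m' (hm'.trans hm) 1 j)]

section RHS

variable (σ₁ σ₂ γ : Matrix (Fin 2) (Fin 2) ℂ)

/-- the right-hand side of the recursion, as a function of `A = H (n+1)`, `B = H 0`,
`C = H n`. -/
private noncomputable def RHS (A B C : ℝ → Matrix (Fin 2) (Fin 2) ℂ) : ℝ → Matrix (Fin 2) (Fin 2) ℂ :=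
  fun x => σ₁⁻¹ * σ₂ * A x - A x * (σ₂ * σ₁⁻¹) +
    σ₁⁻¹ * (γ + σ₂ * B x * σ₁ - σ₁ * B x * σ₂) * C x - C x * (γ * σ₁⁻¹)

private lemma MSN_RHS {N} {A B C : ℝ → Matrix (Fin 2) (Fin 2) ℂ}
    (hA : MSN N A) (hB : MSN N B) (hC : MSN N C) : MSN N (RHS σ₁ σ₂ γ A B C) := by
  have c1 : MSN N (fun x => σ₁⁻¹ * σ₂ * A x) := (MSN_const N (σ₁⁻¹ * σ₂)).mul hA
  have c2 : MSN N (fun x => A x * (σ₂ * σ₁⁻¹)) := hA.mul (MSN_const N (σ₂ * σ₁⁻¹))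
  have c3 : MSN N (fun x => γ + σ₂ * B x * σ₁ - σ₁ * B x * σ₂) :=
    ((MSN_const N γ).add (((MSN_const N σ₂).mul hB).mul (MSN_const N σ₁))).sub
      (((MSN_const N σ₁).mul hB).mul (MSN_const N σ₂))
  have c4 : MSN N (fun x => σ₁⁻¹ * (γ + σ₂ * B x * σ₁ - σ₁ * B x * σ₂) * C x) :=
    ((MSN_const N σ₁⁻¹).mul c3).mul hC
  have c5 : MSN N (fun x => C x * (γ * σ₁⁻¹)) := hC.mul (MSN_const N (γ * σ₁⁻¹))
  exact ((c1.sub c2).add c4).sub c5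

private lemma MA_RHS {k} {A B C A' B' C' : ℝ → Matrix (Fin 2) (Fin 2) ℂ}
    (hA : MSN ∞ A) (hB : MSN ∞ B) (hC : MSN ∞ C)
    (hA' : MSN ∞ A') (hB' : MSN ∞ B') (hC' : MSN ∞ C')
    (h1 : MA k A A') (h2 : MA k B B') (h3 : MA k C C') :
    MA k (RHS σ₁ σ₂ γ A B C) (RHS σ₁ σ₂ γ A' B' C') := by
  have c1 := (MA_const k (σ₁⁻¹ * σ₂)).mul h1 (MSN_const _ _) hA (MSN_const _ _) hA'
  have c2 := h1.mul (MA_const k (σ₂ * σ₁⁻¹)) hA (MSN_const _ _) hA' (MSN_const _ _)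
  have s3 : MSN ∞ (fun x => γ + σ₂ * B x * σ₁ - σ₁ * B x * σ₂) :=
    ((MSN_const _ γ).add (((MSN_const _ σ₂).mul hB).mul (MSN_const _ σ₁))).sub
      (((MSN_const _ σ₁).mul hB).mul (MSN_const _ σ₂))
  have s3' : MSN ∞ (fun x => γ + σ₂ * B' x * σ₁ - σ₁ * B' x * σ₂) :=
    ((MSN_const _ γ).add (((MSN_const _ σ₂).mul hB').mul (MSN_const _ σ₁))).sub
      (((MSN_const _ σ₁).mul hB').mul (MSN_const _ σ₂))
  have c3 : MA k (fun x => γ + σ₂ * B x * σ₁ - σ₁ * B x * σ₂)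
      (fun x => γ + σ₂ * B' x * σ₁ - σ₁ * B' x * σ₂) := by
    refine MA.sub (MA.add (MA_const k γ) ?_ (MSN_const _ _)
        (((MSN_const _ σ₂).mul hB).mul (MSN_const _ σ₁)) (MSN_const _ _)
        (((MSN_const _ σ₂).mul hB').mul (MSN_const _ σ₁))) ?_
      ((MSN_const _ γ).add (((MSN_const _ σ₂).mul hB).mul (MSN_const _ σ₁)))
      (((MSN_const _ σ₁).mul hB).mul (MSN_const _ σ₂))
      ((MSN_const _ γ).add (((MSN_const _ σ₂).mul hB').mul (MSN_const _ σ₁)))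
      (((MSN_const _ σ₁).mul hB').mul (MSN_const _ σ₂))
    · exact ((MA_const k σ₂).mul h2 (MSN_const _ _) hB (MSN_const _ _) hB').mul
        (MA_const k σ₁) ((MSN_const _ σ₂).mul hB) (MSN_const _ _)
        ((MSN_const _ σ₂).mul hB') (MSN_const _ _)
    · exact ((MA_const k σ₁).mul h2 (MSN_const _ _) hB (MSN_const _ _) hB').mul
        (MA_const k σ₂) ((MSN_const _ σ₁).mul hB) (MSN_const _ _)
        ((MSN_const _ σ₁).mul hB') (MSN_const _ _)
  have c4 := (((MA_const k σ₁⁻¹).mul c3 (MSN_const _ _) s3 (MSN_const _ _) s3').mul h3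
    ((MSN_const _ σ₁⁻¹).mul s3) hC ((MSN_const _ σ₁⁻¹).mul s3') hC')
  have c5 := h3.mul (MA_const k (γ * σ₁⁻¹)) hC (MSN_const _ _) hC' (MSN_const _ _)
  have sc1 : MSN ∞ (fun x => σ₁⁻¹ * σ₂ * A x) := (MSN_const _ (σ₁⁻¹ * σ₂)).mul hA
  have sc1' : MSN ∞ (fun x => σ₁⁻¹ * σ₂ * A' x) := (MSN_const _ (σ₁⁻¹ * σ₂)).mul hA'
  have sc2 : MSN ∞ (fun x => A x * (σ₂ * σ₁⁻¹)) := hA.mul (MSN_const _ _)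
  have sc2' : MSN ∞ (fun x => A' x * (σ₂ * σ₁⁻¹)) := hA'.mul (MSN_const _ _)
  have sc4 : MSN ∞ (fun x => σ₁⁻¹ * (γ + σ₂ * B x * σ₁ - σ₁ * B x * σ₂) * C x) :=
    ((MSN_const _ σ₁⁻¹).mul s3).mul hC
  have sc4' : MSN ∞ (fun x => σ₁⁻¹ * (γ + σ₂ * B' x * σ₁ - σ₁ * B' x * σ₂) * C' x) :=
    ((MSN_const _ σ₁⁻¹).mul s3').mul hC'
  have sc5 : MSN ∞ (fun x => C x * (γ * σ₁⁻¹)) := hC.mul (MSN_const _ _)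
  have sc5' : MSN ∞ (fun x => C' x * (γ * σ₁⁻¹)) := hC'.mul (MSN_const _ _)
  exact ((c1.sub c2 sc1 sc2 sc1' sc2').add c4 (sc1.sub sc2) sc4 (sc1'.sub sc2') sc4').sub c5
    ((sc1.sub sc2).add sc4) sc5 ((sc1'.sub sc2').add sc4') sc5'

end RHS

/-- **Uniqueness of the moments:** two sequences of differentiable moments
satisfying the same recursion (with linkage matrices built from their zeroth
moments), with real-analytic zeroth moments and equal initial values at `0`,
have equal zeroth moments, hence equal linkage matrices. -/
theorem moments_unique
    (σ₁ σ₂ γ : Matrix (Fin 2) (Fin 2) ℂ) (hσ₁ : IsUnit σ₁)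
    (H H' Ht Ht' : ℕ → ℝ → Matrix (Fin 2) (Fin 2) ℂ)
    (hH : ∀ (n : ℕ) (x : ℝ) (i j : Fin 2),
      HasDerivAt (fun y => H n y i j) (H' n x i j) x)
    (hHt : ∀ (n : ℕ) (x : ℝ) (i j : Fin 2),
      HasDerivAt (fun y => Ht n y i j) (Ht' n x i j) x)
    (hAnal : ∀ i j : Fin 2, AnalyticOnNhd ℝ (fun x : ℝ => H 0 x i j) Set.univ)
    (hAnalt : ∀ i j : Fin 2, AnalyticOnNhd ℝ (fun x : ℝ => Ht 0 x i j) Set.univ)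
    (hrec : ∀ (n : ℕ) (x : ℝ),
      H' n x = σ₁⁻¹ * σ₂ * H (n + 1) x - H (n + 1) x * (σ₂ * σ₁⁻¹) +
        σ₁⁻¹ * (γ + σ₂ * H 0 x * σ₁ - σ₁ * H 0 x * σ₂) * H n x -
        H n x * (γ * σ₁⁻¹))
    (hrect : ∀ (n : ℕ) (x : ℝ),
      Ht' n x = σ₁⁻¹ * σ₂ * Ht (n + 1) x - Ht (n + 1) x * (σ₂ * σ₁⁻¹) +
        σ₁⁻¹ * (γ + σ₂ * Ht 0 x * σ₁ - σ₁ * Ht 0 x * σ₂) * Ht n x -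
        Ht n x * (γ * σ₁⁻¹))
    (h0 : ∀ n : ℕ, H n 0 = Ht n 0) :
    (∀ x : ℝ, H 0 x = Ht 0 x) ∧
    ∀ x : ℝ, γ + σ₂ * H 0 x * σ₁ - σ₁ * H 0 x * σ₂ =
      γ + σ₂ * Ht 0 x * σ₁ - σ₁ * Ht 0 x * σ₂ := by
  have hsm : ∀ (k : ℕ), ∀ n : ℕ, MSN (k : WithTop ℕ∞) (H n) ∧ MSN (k : WithTop ℕ∞) (Ht n) := by
    intro k
    induction k with
    | zero =>
      intro n
      constructor <;> intro i j <;>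
        rw [show ((0:ℕ) : WithTop ℕ∞) = 0 from by norm_cast, contDiff_zero]
      · exact continuous_iff_continuousAt.mpr fun x => (hH n x i j).continuousAt
      · exact continuous_iff_continuousAt.mpr fun x => (hHt n x i j).continuousAt
    | succ k ih =>
      have hcast : ((k+1 : ℕ) : WithTop ℕ∞) = (k : WithTop ℕ∞) + 1 := by push_cast; ring
      intro n
      constructor
      · intro i j
        rw [hcast, contDiff_succ_iff_deriv]
        refine ⟨fun x => (hH n x i j).differentiableAt, by simp, ?_⟩
        have hdr : deriv (fun x => H n x i j) = fun x => H' n x i j :=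
          funext fun x => (hH n x i j).deriv
        have hrw : (fun x => H' n x i j)
            = fun x => RHS σ₁ σ₂ γ (H (n+1)) (H 0) (H n) x i j :=
          funext fun x => by rw [hrec n x]; rfl
        rw [hdr, hrw]
        exact MSN_RHS σ₁ σ₂ γ (ih (n+1)).1 (ih 0).1 (ih n).1 i j
      · intro i j
        rw [hcast, contDiff_succ_iff_deriv]
        refine ⟨fun x => (hHt n x i j).differentiableAt, by simp, ?_⟩
        have hdr : deriv (fun x => Ht n x i j) = fun x => Ht' n x i j :=
          funext fun x => (hHt n x i j).deriv
        have hrw : (fun x => Ht' n x i j)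
            = fun x => RHS σ₁ σ₂ γ (Ht (n+1)) (Ht 0) (Ht n) x i j :=
          funext fun x => by rw [hrect n x]; rfl
        rw [hdr, hrw]
        exact MSN_RHS σ₁ σ₂ γ (ih (n+1)).2 (ih 0).2 (ih n).2 i j
  have hsH : ∀ n, MSN ∞ (H n) := fun n i j => contDiff_infty.mpr fun k => (hsm k n).1 i j
  have hsHt : ∀ n, MSN ∞ (Ht n) := fun n i j => contDiff_infty.mpr fun k => (hsm k n).2 i j
  have hag : ∀ (k : ℕ) (n : ℕ), MA k (H n) (Ht n) := by
    intro k
    induction k with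
    | zero =>
      intro n m hm i j
      obtain rfl := Nat.le_zero.mp hm
      simp only [iteratedDeriv_zero]
      rw [h0 n]
    | succ k ih =>
      intro n m hm i j
      by_cases hmk : m ≤ k
      · exact ih n m hmk i j
      · obtain rfl : m = k + 1 := le_antisymm hm (by omega)
        have hdr : deriv (fun x => H n x i j) = fun x => H' n x i j :=
          funext fun x => (hH n x i j).deriv
        have hdrt : deriv (fun x => Ht n x i j) = fun x => Ht' n x i j :=
          funext fun x => (hHt n x i j).deriv
        have hrw : (fun x => H' n x i j)
            = fun x => RHS σ₁ σ₂ γ (H (n+1)) (H 0) (H n) x i j :=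
          funext fun x => by rw [hrec n x]; rfl
        have hrwt : (fun x => Ht' n x i j)
            = fun x => RHS σ₁ σ₂ γ (Ht (n+1)) (Ht 0) (Ht n) x i j :=
          funext fun x => by rw [hrect n x]; rfl
        rw [iteratedDeriv_succ', iteratedDeriv_succ', hdr, hdrt, hrw, hrwt]
        exact MA_RHS σ₁ σ₂ γ (hsH (n+1)) (hsH 0) (hsH n) (hsHt (n+1)) (hsHt 0) (hsHt n)
          (ih (n+1)) (ih 0) (ih n) k le_rfl i j
  have key : ∀ (i j : Fin 2) (x : ℝ), H 0 x i j = Ht 0 x i j := by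
    intro i j
    have hz : ∀ k, iteratedDeriv k (fun x => H 0 x i j - Ht 0 x i j) 0 = 0 := by
      intro k
      rw [itd_sub (hsH 0 i j) (hsHt 0 i j), hag k 0 k le_rfl i j, sub_self]
    have hanal : AnalyticOnNhd ℝ (fun x => H 0 x i j - Ht 0 x i j) Set.univ :=
      (hAnal i j).sub (hAnalt i j)
    have hev : (fun x => H 0 x i j - Ht 0 x i j) =ᶠ[nhds (0:ℝ)] 0 :=
      ev_zero_of_itd_zero (hanal 0 (Set.mem_univ 0)) hz
    have heq := hanal.eqOn_zero_of_preconnected_of_eventuallyEq_zero isPreconnected_univ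
      (Set.mem_univ 0) hev
    intro x
    have hx := heq (Set.mem_univ x)
    simpa [sub_eq_zero] using hx
  have first : ∀ x : ℝ, H 0 x = Ht 0 x := fun x => Matrix.ext fun i j => key i j x
  exact ⟨first, fun x => by rw [first x]⟩
end

section
/- Every real sequence is a difference of two Hamburger moment sequences: for every sequence (m_n) of real numbers (n ∈ ℕ) there exist finite positive Borel measures μ₊ and μ₋ on ℝ such that for every n ∈ ℕ the function x ↦ xⁿ is integrable with respect to both μ₊ and μ₋, and m_n = ∫ℝ xⁿ dμ₊(x) − ∫ℝ xⁿ dμ₋(x) for all n. -/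
open MeasureTheory Finset
open scoped ENNReal NNReal


lemma exists_base_weights (k : ℕ) :
    ∃ u : ℕ → ℝ, (∀ i, k + 1 ≤ i → u i = 0) ∧
      ∀ j ≤ k, ∑ i ∈ range (k+1), u i * ((i:ℝ)+1)^j = if j = k then 1 else 0 := by
  set v : Fin (k+1) → ℝ := fun i => (i:ℝ) + 1 with hv
  have hvinj : Function.Injective v := by
    intro a b hab
    have : ((a:ℕ):ℝ) = ((b:ℕ):ℝ) := by simpa [v] using hab
    exact Fin.ext (by exact_mod_cast this)
  set A : Matrix (Fin (k+1)) (Fin (k+1)) ℝ := (Matrix.vandermonde v).transpose with hA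
  have hdet : IsUnit A.det := by
    rw [Matrix.det_transpose]
    exact (Matrix.det_vandermonde_ne_zero_iff.mpr hvinj).isUnit
  set e : Fin (k+1) → ℝ := fun j => if (j:ℕ) = k then 1 else 0 with he
  set u' : Fin (k+1) → ℝ := A⁻¹.mulVec e with hu'
  have h1 : A.mulVec u' = e := by
    rw [hu', Matrix.mulVec_mulVec, Matrix.mul_nonsing_inv _ hdet, Matrix.one_mulVec]
  refine ⟨fun i => if h : i < k + 1 then u' ⟨i, h⟩ else 0, fun i hi => dif_neg (by omega), ?_⟩
  intro j hj
  have hjlt : j < k + 1 := by omega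
  have h2 := congrFun h1 ⟨j, hjlt⟩
  rw [Matrix.mulVec, dotProduct] at h2
  have h3 : ∑ i ∈ range (k+1), (if h : i < k + 1 then u' ⟨i, h⟩ else 0) * ((i:ℝ)+1)^j
      = ∑ i : Fin (k+1), A ⟨j, hjlt⟩ i * u' i := by
    rw [← Fin.sum_univ_eq_sum_range]
    refine Finset.sum_congr rfl fun i _ => ?_
    simp [hA, Matrix.vandermonde, v, mul_comm, not_lt.mpr (Nat.lt_succ_iff.mp i.isLt)]
  rw [h3, h2, he]

noncomputable def baseW (k : ℕ) : ℕ → ℝ := (exists_base_weights k).choose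

lemma baseW_zero (k i : ℕ) (h : k + 1 ≤ i) : baseW k i = 0 :=
  (exists_base_weights k).choose_spec.1 i h

noncomputable def Mom (k j : ℕ) : ℝ := ∑ i ∈ range (k+1), baseW k i * ((i:ℝ)+1)^j

lemma Mom_def (k j : ℕ) : Mom k j = ∑ i ∈ range (k+1), baseW k i * ((i:ℝ)+1)^j := rfl

lemma Mom_eq (k j : ℕ) (h : j ≤ k) : Mom k j = if j = k then 1 else 0 :=
  (exists_base_weights k).choose_spec.2 j h

noncomputable def Vtv (k : ℕ) : ℝ := ∑ i ∈ range (k+1), |baseW k i|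

lemma Vtv_nonneg (k : ℕ) : 0 ≤ Vtv k := Finset.sum_nonneg fun i _ => abs_nonneg _

noncomputable def cOf (s : ℝ) (k : ℕ) : ℝ := (1 + |s|) * (1 + 2^k * Vtv k * ((k:ℝ)+1)^k)

lemma one_le_cOf (s : ℝ) (k : ℕ) : 1 ≤ cOf s k := by
  have h0 : (0:ℝ) ≤ Vtv k := Vtv_nonneg k
  have h1 : (0:ℝ) ≤ 2^k * Vtv k * ((k:ℝ)+1)^k := by positivity
  have h2 : (0:ℝ) ≤ |s| := abs_nonneg s
  unfold cOf
  nlinarith [mul_nonneg h2 h1]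

lemma cOf_pos (s : ℝ) (k : ℕ) : 0 < cOf s k := lt_of_lt_of_le one_pos (one_le_cOf s k)

lemma cOf_ge (s : ℝ) (k : ℕ) : |s| * (2^k * Vtv k * ((k:ℝ)+1)^k) ≤ cOf s k := by
  have h1 : (0:ℝ) ≤ Vtv k := Vtv_nonneg k
  calc |s| * (2^k * Vtv k * ((k:ℝ)+1)^k)
      ≤ (1 + |s|) * (1 + 2^k * Vtv k * ((k:ℝ)+1)^k) := by
        apply mul_le_mul (by simp [abs_nonneg])
          (by linarith [(by positivity : (0:ℝ) ≤ 2^k * Vtv k * ((k:ℝ)+1)^k)])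
          (by positivity) (by positivity)
    _ = cOf s k := rfl

noncomputable def tseq (m : ℕ → ℝ) : ℕ → ℝ
  | k => m k - ∑ j ∈ (Finset.range k).attach,
      tseq m j * (cOf (tseq m j) j) ^ (k - (j:ℕ)) * Mom j k
termination_by k => k
decreasing_by exact Finset.mem_range.mp j.2

lemma tseq_def (m : ℕ → ℝ) (k : ℕ) :
    tseq m k = m k - ∑ j ∈ Finset.range k,
      tseq m j * (cOf (tseq m j) j) ^ (k - j) * Mom j k := by
  rw [tseq]
  congr 1
  exact Finset.sum_attach (Finset.range k)
    (fun j => tseq m j * (cOf (tseq m j) j) ^ (k - j) * Mom j k)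


noncomputable def cc (m : ℕ → ℝ) (k : ℕ) : ℝ := cOf (tseq m k) k

lemma cc_pos (m : ℕ → ℝ) (k : ℕ) : 0 < cc m k := cOf_pos _ _
lemma one_le_cc (m : ℕ → ℝ) (k : ℕ) : 1 ≤ cc m k := one_le_cOf _ _

noncomputable def wt (m : ℕ → ℝ) (p : ℕ × ℕ) : ℝ :=
  tseq m p.1 / (cc m p.1) ^ p.1 * baseW p.1 p.2

noncomputable def pt (m : ℕ → ℝ) (p : ℕ × ℕ) : ℝ := cc m p.1 * ((p.2:ℝ) + 1)

lemma pt_pos (m : ℕ → ℝ) (p : ℕ × ℕ) : 0 < pt m p :=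
  mul_pos (cc_pos m p.1) (by positivity)

lemma wt_zero (m : ℕ → ℝ) (k i : ℕ) (h : k + 1 ≤ i) : wt m (k, i) = 0 := by
  simp [wt, baseW_zero k i h]

lemma sum_wt_pow (m : ℕ → ℝ) (n k : ℕ) :
    ∑ i ∈ range (k+1), wt m (k, i) * pt m (k, i) ^ n
      = tseq m k * (cc m k)^n / (cc m k)^k * Mom k n := by
  rw [Mom_def, Finset.mul_sum]
  refine Finset.sum_congr rfl fun i _ => ?_
  simp only [wt, pt]
  rw [mul_pow]
  ring

lemma sum_abs_wt_pow (m : ℕ → ℝ) (n k : ℕ) :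
    ∑ i ∈ range (k+1), |wt m (k, i)| * pt m (k, i) ^ n
      = |tseq m k| * (cc m k)^n / (cc m k)^k
          * ∑ i ∈ range (k+1), |baseW k i| * ((i:ℝ)+1)^n := by
  rw [Finset.mul_sum]
  refine Finset.sum_congr rfl fun i _ => ?_
  have hc : (0:ℝ) < cc m k := cc_pos m k
  simp only [wt, pt]
  rw [abs_mul, abs_div, abs_of_pos (pow_pos hc k), mul_pow]
  ring

lemma abs_sum_le (m : ℕ → ℝ) (n k : ℕ) (h : n < k) :
    ∑ i ∈ range (k+1), |wt m (k, i)| * pt m (k, i) ^ n ≤ (1/2:ℝ)^k := by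
  rw [sum_abs_wt_pow]
  set c := cc m k with hcdef
  set t := |tseq m k|
  set V := Vtv k
  set P := ((k:ℝ)+1)^k
  have hc0 : (0:ℝ) < c := cc_pos m k
  have hc1 : (1:ℝ) ≤ c := one_le_cc m k
  have ht : (0:ℝ) ≤ t := abs_nonneg _
  have hV : (0:ℝ) ≤ V := Vtv_nonneg k
  have hP : (0:ℝ) ≤ P := by positivity
  have hS : ∑ i ∈ range (k+1), |baseW k i| * ((i:ℝ)+1)^n ≤ V * P := by
    have hVP : V * P = ∑ i ∈ range (k+1), |baseW k i| * P := by
      rw [show V = ∑ i ∈ range (k+1), |baseW k i| from rfl, Finset.sum_mul]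
    rw [hVP]
    refine Finset.sum_le_sum fun i hi => ?_
    have hik : (i:ℝ) + 1 ≤ (k:ℝ) + 1 := by
      have := Finset.mem_range.mp hi
      have : (i:ℝ) ≤ k := by exact_mod_cast Nat.lt_succ_iff.mp (Finset.mem_range.mp hi)
      linarith
    have h1 : ((i:ℝ)+1)^n ≤ ((k:ℝ)+1)^n := pow_le_pow_left₀ (by positivity) hik n
    have h2 : ((k:ℝ)+1)^n ≤ ((k:ℝ)+1)^k := pow_le_pow_right₀ (by have := Nat.cast_nonneg (α := ℝ) k; linarith) (le_of_lt h)
    exact mul_le_mul_of_nonneg_left (le_trans h1 h2) (abs_nonneg _)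
  have hS0 : (0:ℝ) ≤ ∑ i ∈ range (k+1), |baseW k i| * ((i:ℝ)+1)^n :=
    Finset.sum_nonneg fun i _ => mul_nonneg (abs_nonneg _) (by positivity)
  have H2 : t * (2^k * V * P) ≤ c := cOf_ge _ _
  have key : t * c^n * (∑ i ∈ range (k+1), |baseW k i| * ((i:ℝ)+1)^n) * 2^k ≤ c^k := by
    calc t * c^n * (∑ i ∈ range (k+1), |baseW k i| * ((i:ℝ)+1)^n) * 2^k
        ≤ t * c^n * (V*P) * 2^k := by
          apply mul_le_mul_of_nonneg_right
            (mul_le_mul_of_nonneg_left hS (by positivity)) (by positivity)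
      _ = (t * (2^k * V * P)) * c^n := by ring
      _ ≤ c * c^n := mul_le_mul_of_nonneg_right H2 (by positivity)
      _ = c^(n+1) := by rw [pow_succ]; ring
      _ ≤ c^k := pow_le_pow_right₀ hc1 (by omega)
  have e1 : t * c^n / c^k * (∑ i ∈ range (k+1), |baseW k i| * ((i:ℝ)+1)^n)
      = t * c^n * (∑ i ∈ range (k+1), |baseW k i| * ((i:ℝ)+1)^n) / c^k := by ring
  rw [e1, div_pow, one_pow, div_le_div_iff₀ (pow_pos hc0 k) (by positivity)]
  calc t * c^n * (∑ i ∈ range (k+1), |baseW k i| * ((i:ℝ)+1)^n) * 2^k ≤ c^k := key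
    _ = 1 * c^k := (one_mul _).symm

lemma summable_inner (m : ℕ → ℝ) (n k : ℕ) :
    Summable (fun i : ℕ => |wt m (k, i)| * pt m (k, i) ^ n) :=
  summable_of_ne_finset_zero (s := range (k+1)) fun i hi => by
    rw [wt_zero m k i (Nat.le_of_not_lt fun hlt => hi (Finset.mem_range.mpr hlt))]
    simp

lemma tsum_inner_abs (m : ℕ → ℝ) (n k : ℕ) :
    ∑' i : ℕ, |wt m (k, i)| * pt m (k, i) ^ n
      = ∑ i ∈ range (k+1), |wt m (k, i)| * pt m (k, i) ^ n :=
  tsum_eq_sum fun i hi => by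
    rw [wt_zero m k i (Nat.le_of_not_lt fun hlt => hi (Finset.mem_range.mpr hlt))]
    simp

lemma summable_A (m : ℕ → ℝ) (n : ℕ) :
    Summable (fun k => ∑ i ∈ range (k+1), |wt m (k, i)| * pt m (k, i) ^ n) := by
  rw [← summable_nat_add_iff (n+1)]
  refine Summable.of_nonneg_of_le
    (fun k => Finset.sum_nonneg fun i _ =>
      mul_nonneg (abs_nonneg _) (le_of_lt (pow_pos (pt_pos m _) n)))
    (fun k => abs_sum_le m n (k+(n+1)) (by omega)) ?_
  have h : Summable (fun k : ℕ => (1/2:ℝ)^(k+(n+1))) := by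
    simp_rw [pow_add]
    exact (summable_geometric_of_lt_one (by norm_num) (by norm_num)).mul_right _
  exact h

lemma summable_abs_wt (m : ℕ → ℝ) (n : ℕ) :
    Summable (fun p : ℕ × ℕ => |wt m p| * pt m p ^ n) := by
  refine (summable_prod_of_nonneg fun p =>
    mul_nonneg (abs_nonneg _) (le_of_lt (pow_pos (pt_pos m p) n))).2
    ⟨fun k => summable_inner m n k, ?_⟩
  exact Summable.congr (summable_A m n) fun k => (tsum_inner_abs m n k).symm

lemma summable_wt (m : ℕ → ℝ) (n : ℕ) :
    Summable (fun p : ℕ × ℕ => wt m p * pt m p ^ n) := by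
  apply Summable.of_abs
  exact (summable_abs_wt m n).congr fun p => by
    rw [abs_mul, abs_of_pos (pow_pos (pt_pos m p) n)]

lemma summable_inner_signed (m : ℕ → ℝ) (n k : ℕ) :
    Summable (fun i : ℕ => wt m (k, i) * pt m (k, i) ^ n) :=
  Summable.of_abs ((summable_inner m n k).congr fun i => by
    rw [abs_mul, abs_of_pos (pow_pos (pt_pos m _) n)])

lemma tsum_wt (m : ℕ → ℝ) (n : ℕ) : ∑' p : ℕ × ℕ, wt m p * pt m p ^ n = m n := by
  rw [Summable.tsum_prod' (summable_wt m n) (fun k => summable_inner_signed m n k)]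
  have hinner : ∀ k, ∑' i : ℕ, wt m (k, i) * pt m (k, i) ^ n
      = tseq m k * (cc m k)^n / (cc m k)^k * Mom k n := by
    intro k
    rw [tsum_eq_sum (s := range (k+1)) (fun i hi => by
      rw [wt_zero m k i (Nat.le_of_not_lt fun hlt => hi (Finset.mem_range.mpr hlt))]
      ring), sum_wt_pow]
  simp_rw [hinner]
  rw [tsum_eq_sum (s := range (n+1)) (fun k hk => by
    have hnk : n < k := Nat.lt_of_succ_le (Nat.le_of_not_lt fun hlt => hk (Finset.mem_range.mpr hlt))
    rw [Mom_eq k n (le_of_lt hnk), if_neg (Nat.ne_of_lt hnk)]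
    ring)]
  rw [Finset.sum_range_succ]
  have hlast : tseq m n * (cc m n)^n / (cc m n)^n * Mom n n = tseq m n := by
    rw [Mom_eq n n le_rfl, if_pos rfl,
      mul_div_assoc, div_self (ne_of_gt (pow_pos (cc_pos m n) n))]
    ring
  have hfirst : ∑ k ∈ range n, tseq m k * (cc m k)^n / (cc m k)^k * Mom k n
      = ∑ k ∈ range n, tseq m k * (cOf (tseq m k) k) ^ (n - k) * Mom k n := by
    refine Finset.sum_congr rfl fun k hk => ?_
    have hkn : k < n := Finset.mem_range.mp hk
    have hpow : (cc m k)^n = (cc m k)^k * (cc m k)^(n-k) := by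
      rw [← pow_add]; congr 1; omega
    rw [hpow, mul_comm ((cc m k)^k), mul_div_assoc,
      mul_div_cancel_right₀ _ (ne_of_gt (pow_pos (cc_pos m k) k))]
    rfl
  rw [hlast, hfirst]
  have := tseq_def m n
  linarith


open MeasureTheory
open scoped ENNReal NNReal

lemma aux_meas (w x : ℕ × ℕ → ℝ) (hx : ∀ p, 0 < x p)
    (hs : ∀ n : ℕ, Summable fun p => |w p| * x p ^ n) :
    IsFiniteMeasure (Measure.sum fun p => ENNReal.ofReal (w p) • Measure.dirac (x p)) ∧
    (∀ n : ℕ, Integrable (fun y : ℝ => y ^ n)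
      (Measure.sum fun p => ENNReal.ofReal (w p) • Measure.dirac (x p))) ∧
    (∀ n : ℕ, (∫ y : ℝ, y ^ n ∂(Measure.sum fun p => ENNReal.ofReal (w p) • Measure.dirac (x p)))
      = ∑' p : ℕ × ℕ, max (w p) 0 * x p ^ n) := by
  set μ := Measure.sum fun p : ℕ × ℕ => ENNReal.ofReal (w p) • Measure.dirac (x p) with hμ
  have hnn : ∀ n : ℕ, (∑' p : ℕ × ℕ, (‖w p * x p ^ n‖₊ : ℝ≥0∞)) ≠ ⊤ := by
    intro n
    rw [ENNReal.tsum_coe_ne_top_iff_summable]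
    apply NNReal.summable_coe.1
    apply (hs n).congr
    intro p
    rw [coe_nnnorm, Real.norm_eq_abs, abs_mul, abs_of_pos (pow_pos (hx p) n)]
  have hlin : ∀ n : ℕ, (∫⁻ y : ℝ, ‖y ^ n‖₊ ∂μ)
      = ∑' p : ℕ × ℕ, ENNReal.ofReal (w p) * ‖x p ^ n‖₊ := by
    intro n
    rw [hμ, lintegral_sum_measure]
    congr 1
    funext p
    rw [lintegral_smul_measure, lintegral_dirac, smul_eq_mul]
  have hfin : ∀ n : ℕ, (∫⁻ y : ℝ, ‖y ^ n‖₊ ∂μ) < ⊤ := by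
    intro n
    rw [hlin n]
    refine lt_of_le_of_lt (ENNReal.tsum_le_tsum fun p => ?_)
      (lt_top_iff_ne_top.mpr (hnn n))
    calc ENNReal.ofReal (w p) * (‖x p ^ n‖₊ : ℝ≥0∞)
        ≤ (‖w p‖₊ : ℝ≥0∞) * (‖x p ^ n‖₊ : ℝ≥0∞) := by
          refine mul_le_mul_left ?_ _
          refine le_trans (ENNReal.ofReal_le_ofReal (le_abs_self _)) ?_
          exact le_of_eq (Real.enorm_eq_ofReal_abs _).symm
      _ = (‖w p * x p ^ n‖₊ : ℝ≥0∞) := by rw [nnnorm_mul, ENNReal.coe_mul]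
  have hint : ∀ n : ℕ, Integrable (fun y : ℝ => y ^ n) μ := fun n =>
    ⟨(continuous_pow n).aestronglyMeasurable, (hasFiniteIntegral_def _ _).2 (hfin n)⟩
  have hfm : IsFiniteMeasure μ := by
    constructor
    have h0 : (∫⁻ y : ℝ, ‖y ^ 0‖₊ ∂μ) = μ Set.univ := by simp
    rw [← h0]
    exact hfin 0
  refine ⟨hfm, hint, fun n => ?_⟩
  rw [integral_sum_measure (hint n)]
  congr 1
  funext p
  rw [integral_smul_measure, integral_dirac, ENNReal.toReal_ofReal', smul_eq_mul]

/-- **Every real sequence is a difference of two Hamburger moment sequences:**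
for any real sequence `(mₙ)` there are finite positive Borel measures `μ₊`, `μ₋`
on `ℝ` with all power moments finite such that
`mₙ = ∫ xⁿ dμ₊ - ∫ xⁿ dμ₋` for all `n`. -/
theorem real_seq_is_difference_of_hamburger_moment_sequences (m : ℕ → ℝ) :
    ∃ μp μn : Measure ℝ, IsFiniteMeasure μp ∧ IsFiniteMeasure μn ∧
      (∀ n : ℕ, Integrable (fun x : ℝ => x ^ n) μp) ∧
      (∀ n : ℕ, Integrable (fun x : ℝ => x ^ n) μn) ∧
      (∀ n : ℕ, m n = (∫ x : ℝ, x ^ n ∂μp) - ∫ x : ℝ, x ^ n ∂μn) := by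
  obtain ⟨hp1, hp2, hp3⟩ := aux_meas (wt m) (pt m) (pt_pos m) (summable_abs_wt m)
  obtain ⟨hn1, hn2, hn3⟩ := aux_meas (fun p => -wt m p) (pt m) (pt_pos m)
    (fun n => (summable_abs_wt m n).congr fun p => by rw [abs_neg])
  refine ⟨_, _, hp1, hn1, hp2, hn2, fun n => ?_⟩
  rw [hp3 n, hn3 n]
  have hs1 : Summable fun p : ℕ × ℕ => max (wt m p) 0 * pt m p ^ n :=
    Summable.of_nonneg_of_le
      (fun p => mul_nonneg (le_max_right _ _) (le_of_lt (pow_pos (pt_pos m p) n)))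
      (fun p => mul_le_mul_of_nonneg_right (max_le (le_abs_self _) (abs_nonneg _))
        (le_of_lt (pow_pos (pt_pos m p) n)))
      (summable_abs_wt m n)
  have hs2 : Summable fun p : ℕ × ℕ => max (-wt m p) 0 * pt m p ^ n :=
    Summable.of_nonneg_of_le
      (fun p => mul_nonneg (le_max_right _ _) (le_of_lt (pow_pos (pt_pos m p) n)))
      (fun p => mul_le_mul_of_nonneg_right (max_le (neg_le_abs _) (abs_nonneg _))
        (le_of_lt (pow_pos (pt_pos m p) n)))
      (summable_abs_wt m n)
  rw [← Summable.tsum_sub hs1 hs2]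
  have hpt : ∀ p : ℕ × ℕ, max (wt m p) 0 * pt m p ^ n - max (-wt m p) 0 * pt m p ^ n
      = wt m p * pt m p ^ n := fun p => by
    rw [← sub_mul, max_zero_sub_max_neg_zero_eq_self]
  rw [tsum_congr hpt, tsum_wt m n]
end

section
/- t-evolution of the transfer function of a KdV vessel (bounded case): in the bounded KdV vessel setting, let λ ∈ ℂ be such that λ·I − A is invertible, and define S(λ,x,t) := I − C(x,t)∘X(x,t)⁻¹∘(λ·I − A)⁻¹∘B(x,t)∘σ₁ and H₀(x,t) := C(x,t)∘X(x,t)⁻¹∘B(x,t). Then for all (x,t) ∈ ℝ², ∂ₜ S(λ,x,t) = iλ ∂ₓ S(λ,x,t) + i ∂ₓ[H₀](x,t) σ₁ S(λ,x,t). -/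
open ContinuousLinearMap

private lemma comp_cancel_left {E F G : Type*} [NormedAddCommGroup E] [NormedSpace ℂ E]
    [NormedAddCommGroup F] [NormedSpace ℂ F] [NormedAddCommGroup G] [NormedSpace ℂ G]
    (f : F →L[ℂ] G) (g : G →L[ℂ] F) (h : f ∘L g = 1) (W : E →L[ℂ] G) :
    f ∘L (g ∘L W) = W := by
  rw [← ContinuousLinearMap.comp_assoc, h, ContinuousLinearMap.one_def,
    ContinuousLinearMap.id_comp]

private lemma hasDerivAt_inverse_of {H : Type*} [NormedAddCommGroup H] [NormedSpace ℂ H]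
    [CompleteSpace H] (Xf Xinvf : ℝ → (H →L[ℂ] H))
    (h1 : ∀ y, Xf y ∘L Xinvf y = 1) (h2 : ∀ y, Xinvf y ∘L Xf y = 1)
    {p : ℝ} {D : H →L[ℂ] H} (hD : HasDerivAt Xf D p) :
    HasDerivAt Xinvf (-(Xinvf p ∘L (D ∘L Xinvf p))) p := by
  let u : ℝ → (H →L[ℂ] H)ˣ := fun y =>
    ⟨Xf y, Xinvf y, by rw [ContinuousLinearMap.mul_def]; exact h1 y,
      by rw [ContinuousLinearMap.mul_def]; exact h2 y⟩
  have hinv : ∀ y, Ring.inverse (Xf y) = Xinvf y := fun y => Ring.inverse_unit (u y)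
  have key := ((hasFDerivAt_ringInverse (𝕜 := ℂ) (u p)).restrictScalars ℝ).comp_hasDerivAt p hD
  have hfun : (Ring.inverse ∘ Xf : ℝ → H →L[ℂ] H) = Xinvf := funext fun y => hinv y
  rw [hfun] at key
  refine key.congr_deriv ?_
  rfl

private lemma hasDerivAt_clm_comp {F G E' : Type*} [NormedAddCommGroup F] [NormedSpace ℂ F]
    [NormedAddCommGroup G] [NormedSpace ℂ G] [NormedAddCommGroup E'] [NormedSpace ℂ E']
    {c : ℝ → F →L[ℂ] G} {d : ℝ → E' →L[ℂ] F} {c' : F →L[ℂ] G} {d' : E' →L[ℂ] F} {x : ℝ}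
    (hc : HasDerivAt c c' x) (hd : HasDerivAt d d' x) :
    HasDerivAt (fun y => c y ∘L d y) (c' ∘L d x + c x ∘L d') x := by
  have hb : IsBoundedBilinearMap ℝ
      (fun p : (F →L[ℂ] G) × (E' →L[ℂ] F) => p.1.comp p.2) := by
    refine ⟨fun x₁ x₂ y => ?_, fun r x y => ?_, fun x y₁ y₂ => ?_, fun r x y => ?_,
      ⟨1, one_pos, fun x y => by simpa using ContinuousLinearMap.opNorm_comp_le x y⟩⟩
    · exact ContinuousLinearMap.add_comp _ _ _
    · exact ContinuousLinearMap.smul_comp _ _ _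
    · exact ContinuousLinearMap.comp_add _ _ _
    · exact ContinuousLinearMap.comp_smul _ _ _
  have key := (hb.hasFDerivAt (c x, d x)).comp_hasDerivAt x (hc.prodMk hd)
  simp [add_comm] at key
  exact key

set_option maxHeartbeats 2000000 in
/-- **t-evolution of the transfer function of a KdV vessel (bounded case):**
with `S(λ,x,t) = I - C X⁻¹ (λI - A)⁻¹ B σ₁` and `H₀ = C X⁻¹ B`, one has
`∂ₜ S = iλ ∂ₓ S + i ∂ₓ[H₀] σ₁ S`. -/
theorem kdv_transfer_function_t_evolution
    {H : Type*} [NormedAddCommGroup H] [InnerProductSpace ℂ H] [CompleteSpace H]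
    (σ₁ σ₁inv σ₂ γ : (Fin 2 → ℂ) →L[ℂ] (Fin 2 → ℂ))
    (hσ₁ : σ₁ ∘L σ₁inv = 1) (hσ₁inv : σ₁inv ∘L σ₁ = 1)
    (A Aζ : H →L[ℂ] H)
    (B : ℝ → ℝ → ((Fin 2 → ℂ) →L[ℂ] H))
    (C : ℝ → ℝ → (H →L[ℂ] (Fin 2 → ℂ)))
    (X Xinv : ℝ → ℝ → (H →L[ℂ] H))
    (hXinv : ∀ x t : ℝ, X x t ∘L Xinv x t = 1)
    (hXinv' : ∀ x t : ℝ, Xinv x t ∘L X x t = 1)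
    (hBx : ∀ x t : ℝ, HasDerivAt (fun y => B y t)
      ((-((A ∘L B x t) ∘L σ₂ + B x t ∘L γ)) ∘L σ₁inv) x)
    (hCx : ∀ x t : ℝ, HasDerivAt (fun y => C y t)
      (σ₁inv ∘L (-(σ₂ ∘L (C x t ∘L Aζ)) + γ ∘L C x t)) x)
    (hXx : ∀ x t : ℝ, HasDerivAt (fun y => X y t) ((B x t ∘L σ₂) ∘L C x t) x)
    (hBt : ∀ x t : ℝ, HasDerivAt (fun s => B x s)
      ((-Complex.I) • (A ∘L (((A ∘L B x t) ∘L σ₂ + B x t ∘L γ) ∘L σ₁inv))) t)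
    (hCt : ∀ x t : ℝ, HasDerivAt (fun s => C x s)
      ((-Complex.I) • ((σ₁inv ∘L (-(σ₂ ∘L (C x t ∘L Aζ)) + γ ∘L C x t)) ∘L Aζ)) t)
    (hXt : ∀ x t : ℝ, HasDerivAt (fun s => X x s)
      (Complex.I • (A ∘L ((B x t ∘L σ₂) ∘L C x t)
        - ((B x t ∘L σ₂) ∘L C x t) ∘L Aζ + (B x t ∘L γ) ∘L C x t)) t)
    (hLyap : ∀ x t : ℝ, A ∘L X x t + X x t ∘L Aζ + (B x t ∘L σ₁) ∘L C x t = 0)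
    (l : ℂ) (R : H →L[ℂ] H)
    (hR : (l • (1 : H →L[ℂ] H) - A) ∘L R = 1)
    (hR' : R ∘L (l • (1 : H →L[ℂ] H) - A) = 1) :
    ∃ (Sx H0x : ℝ → ℝ → ((Fin 2 → ℂ) →L[ℂ] (Fin 2 → ℂ))),
      (∀ x t : ℝ, HasDerivAt
        (fun y => (1 : (Fin 2 → ℂ) →L[ℂ] (Fin 2 → ℂ))
          - C y t ∘L (Xinv y t ∘L (R ∘L (B y t ∘L σ₁)))) (Sx x t) x) ∧
      (∀ x t : ℝ, HasDerivAt
        (fun y => C y t ∘L (Xinv y t ∘L B y t)) (H0x x t) x) ∧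
      (∀ x t : ℝ, HasDerivAt
        (fun s => (1 : (Fin 2 → ℂ) →L[ℂ] (Fin 2 → ℂ))
          - C x s ∘L (Xinv x s ∘L (R ∘L (B x s ∘L σ₁))))
        ((Complex.I * l) • Sx x t +
          Complex.I • ((H0x x t ∘L σ₁) ∘L
            ((1 : (Fin 2 → ℂ) →L[ℂ] (Fin 2 → ℂ))
              - C x t ∘L (Xinv x t ∘L (R ∘L (B x t ∘L σ₁)))))) t) := by
  have hPx : ∀ x t : ℝ, HasDerivAt (fun y => Xinv y t)
      (-(Xinv x t ∘L ((((B x t ∘L σ₂) ∘L C x t)) ∘L Xinv x t))) x := fun x t =>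
    hasDerivAt_inverse_of (fun y => X y t) (fun y => Xinv y t)
      (fun y => hXinv y t) (fun y => hXinv' y t) (hXx x t)
  have hPt : ∀ x t : ℝ, HasDerivAt (fun s => Xinv x s)
      (-(Xinv x t ∘L ((Complex.I • (A ∘L ((B x t ∘L σ₂) ∘L C x t)
        - ((B x t ∘L σ₂) ∘L C x t) ∘L Aζ + (B x t ∘L γ) ∘L C x t)) ∘L Xinv x t))) t :=
    fun x t =>
    hasDerivAt_inverse_of (fun s => X x s) (fun s => Xinv x s)
      (fun s => hXinv x s) (fun s => hXinv' x s) (hXt x t)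
  have hSder := fun x t : ℝ =>
    (hasDerivAt_const x (1 : (Fin 2 → ℂ) →L[ℂ] (Fin 2 → ℂ))).sub
      (hasDerivAt_clm_comp (hCx x t) (hasDerivAt_clm_comp (hPx x t)
        (hasDerivAt_clm_comp (hasDerivAt_const x R)
          (hasDerivAt_clm_comp (hBx x t) (hasDerivAt_const x σ₁)))))
  have hHder := fun x t : ℝ =>
    hasDerivAt_clm_comp (hCx x t) (hasDerivAt_clm_comp (hPx x t) (hBx x t))
  simp only [Pi.sub_def] at hSder
  refine ⟨fun x t => deriv
      (fun y => (1 : (Fin 2 → ℂ) →L[ℂ] (Fin 2 → ℂ))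
        - C y t ∘L (Xinv y t ∘L (R ∘L (B y t ∘L σ₁)))) x,
    fun x t => deriv (fun y => C y t ∘L (Xinv y t ∘L B y t)) x,
    fun x t => (hSder x t).differentiableAt.hasDerivAt,
    fun x t => (hHder x t).differentiableAt.hasDerivAt,
    fun x t => ?_⟩
  beta_reduce
  rw [(hSder x t).deriv, (hHder x t).deriv]
  have hSt :=
    (hasDerivAt_const t (1 : (Fin 2 → ℂ) →L[ℂ] (Fin 2 → ℂ))).sub
      (hasDerivAt_clm_comp (hCt x t) (hasDerivAt_clm_comp (hPt x t)
        (hasDerivAt_clm_comp (hasDerivAt_const t R)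
          (hasDerivAt_clm_comp (hBt x t) (hasDerivAt_const t σ₁)))))
  refine hSt.congr_deriv (Eq.symm ?_)
  -- now a pure algebraic identity
  have hXAz : X x t ∘L Aζ = -(A ∘L X x t) - (B x t ∘L σ₁) ∘L C x t := by
    have h2 : X x t ∘L Aζ + (A ∘L X x t + (B x t ∘L σ₁) ∘L C x t) = 0 := by
      rw [← hLyap x t]; abel
    rw [eq_neg_of_add_eq_zero_left h2]; abel
  have hAz : ∀ W : (Fin 2 → ℂ) →L[ℂ] H,
      Aζ ∘L (Xinv x t ∘L W) =
        -(Xinv x t ∘L (A ∘L W))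
          - Xinv x t ∘L (B x t ∘L (σ₁ ∘L (C x t ∘L (Xinv x t ∘L W)))) := by
    intro W
    have h1 : Aζ ∘L (Xinv x t ∘L W)
        = Xinv x t ∘L ((X x t ∘L Aζ) ∘L (Xinv x t ∘L W)) := by
      rw [ContinuousLinearMap.comp_assoc, comp_cancel_left _ _ (hXinv' x t)]
    rw [h1, hXAz]
    simp only [ContinuousLinearMap.sub_comp, ContinuousLinearMap.neg_comp,
      ContinuousLinearMap.comp_sub, ContinuousLinearMap.comp_neg,
      ContinuousLinearMap.comp_assoc, comp_cancel_left _ _ (hXinv x t)]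
  have hARl : ∀ W : (Fin 2 → ℂ) →L[ℂ] H, A ∘L (R ∘L W) = l • (R ∘L W) - W := by
    intro W
    have h1 : l • (R ∘L W) - A ∘L (R ∘L W) = W := by
      have h0 : ((l • (1 : H →L[ℂ] H) - A) ∘L R) ∘L W = W := by
        rw [hR, ContinuousLinearMap.one_def, ContinuousLinearMap.id_comp]
      rw [ContinuousLinearMap.comp_assoc, ContinuousLinearMap.sub_comp,
        ContinuousLinearMap.smul_comp, ContinuousLinearMap.one_def,
        ContinuousLinearMap.id_comp] at h0
      exact h0
    calc A ∘L (R ∘L W)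
        = l • (R ∘L W) - (l • (R ∘L W) - A ∘L (R ∘L W)) := by abel
      _ = l • (R ∘L W) - W := by rw [h1]
  have hRAl : ∀ W : (Fin 2 → ℂ) →L[ℂ] H, R ∘L (A ∘L W) = l • (R ∘L W) - W := by
    intro W
    have h1 : l • (R ∘L W) - R ∘L (A ∘L W) = W := by
      have h0 : R ∘L ((l • (1 : H →L[ℂ] H) - A) ∘L W) = W := by
        rw [← ContinuousLinearMap.comp_assoc, hR', ContinuousLinearMap.one_def,
          ContinuousLinearMap.id_comp]
      rw [ContinuousLinearMap.sub_comp, ContinuousLinearMap.smul_comp,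
        ContinuousLinearMap.one_def, ContinuousLinearMap.id_comp,
        ContinuousLinearMap.comp_sub, ContinuousLinearMap.comp_smul] at h0
      exact h0
    calc R ∘L (A ∘L W)
        = l • (R ∘L W) - (l • (R ∘L W) - R ∘L (A ∘L W)) := by abel
      _ = l • (R ∘L W) - W := by rw [h1]
  simp only [hAz, hARl, hRAl, comp_cancel_left _ _ hσ₁inv, hσ₁inv,
    ContinuousLinearMap.comp_assoc, ContinuousLinearMap.comp_add,
    ContinuousLinearMap.add_comp, ContinuousLinearMap.comp_sub,
    ContinuousLinearMap.sub_comp, ContinuousLinearMap.comp_neg,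
    ContinuousLinearMap.neg_comp, ContinuousLinearMap.comp_smul,
    ContinuousLinearMap.smul_comp, ContinuousLinearMap.comp_zero,
    ContinuousLinearMap.zero_comp, ContinuousLinearMap.one_def,
    ContinuousLinearMap.comp_id, ContinuousLinearMap.id_comp,
    smul_sub, smul_add, smul_neg, smul_smul, neg_neg,
    zero_sub, sub_zero, add_zero, zero_add]
  module
end

section
/- Evolution equation for the linkage matrix: let σ₁, σ₂, γ be 2×2 complex matrices with σ₁ invertible. Let H₀ : ℝ² → M₂(ℂ) be twice differentiable in x and differentiable in t, and H₁ : ℝ² → M₂(ℂ) be differentiable in x. Define γ*(x,t) := γ + σ₂ H₀(x,t) σ₁ − σ₁ H₀(x,t) σ₂. Assume that for all (x,t): ∂ₓH₀ = σ₁⁻¹σ₂ H₁ − H₁ σ₂σ₁⁻¹ + σ₁⁻¹γ* H₀ − H₀ γ σ₁⁻¹ and ∂ₜH₀ = i ∂ₓH₁ + i ∂ₓ[H₀] σ₁ H₀. Then for all (x,t): ∂ₜγ* = −i γ* ∂ₓ[H₀] σ₁ + i σ₁ ∂ₓₓ[H₀] σ₁ + i σ₁ ∂ₓ[H₀] γ*.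 -/
private lemma entry_mul {A B : ℝ → Matrix (Fin 2) (Fin 2) ℂ}
    {A' B' : Matrix (Fin 2) (Fin 2) ℂ} {t : ℝ}
    (hA : ∀ i j, HasDerivAt (fun s => A s i j) (A' i j) t)
    (hB : ∀ i j, HasDerivAt (fun s => B s i j) (B' i j) t) (i j : Fin 2) :
    HasDerivAt (fun s => (A s * B s) i j) ((A' * B t + A t * B') i j) t := by
  simp only [Matrix.mul_apply, Matrix.add_apply]
  rw [← Finset.sum_add_distrib]
  exact HasDerivAt.fun_sum fun k _ => (hA i k).mul (hB k j)

private lemma entry_const (c : Matrix (Fin 2) (Fin 2) ℂ) (t : ℝ) (i j : Fin 2) :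
    HasDerivAt (fun _ : ℝ => c i j) ((0 : Matrix (Fin 2) (Fin 2) ℂ) i j) t := by
  simpa using hasDerivAt_const t (c i j)

private lemma entry_cmul (c : Matrix (Fin 2) (Fin 2) ℂ) {B : ℝ → Matrix (Fin 2) (Fin 2) ℂ}
    {B' : Matrix (Fin 2) (Fin 2) ℂ} {t : ℝ}
    (hB : ∀ i j, HasDerivAt (fun s => B s i j) (B' i j) t) (i j : Fin 2) :
    HasDerivAt (fun s => (c * B s) i j) ((c * B') i j) t := by
  have := entry_mul (A := fun _ => c) (entry_const c t) hB i j
  simpa using this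

private lemma entry_mulc (c : Matrix (Fin 2) (Fin 2) ℂ) {A : ℝ → Matrix (Fin 2) (Fin 2) ℂ}
    {A' : Matrix (Fin 2) (Fin 2) ℂ} {t : ℝ}
    (hA : ∀ i j, HasDerivAt (fun s => A s i j) (A' i j) t) (i j : Fin 2) :
    HasDerivAt (fun s => (A s * c) i j) ((A' * c) i j) t := by
  have := entry_mul (B := fun _ => c) hA (entry_const c t) i j
  simpa using this

/-- The linkage matrix `γ* = γ + σ₂ H₀ σ₁ - σ₁ H₀ σ₂` built from a moment. -/
noncomputable def gammaStarM (σ₁ σ₂ γ H0 : Matrix (Fin 2) (Fin 2) ℂ) :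
    Matrix (Fin 2) (Fin 2) ℂ :=
  γ + σ₂ * H0 * σ₁ - σ₁ * H0 * σ₂

private lemma entry_gamma (σ₁ σ₂ γ : Matrix (Fin 2) (Fin 2) ℂ)
    {H : ℝ → Matrix (Fin 2) (Fin 2) ℂ} {H' : Matrix (Fin 2) (Fin 2) ℂ} {t : ℝ}
    (hH : ∀ i j, HasDerivAt (fun s => H s i j) (H' i j) t) (i j : Fin 2) :
    HasDerivAt (fun s => gammaStarM σ₁ σ₂ γ (H s) i j)
      ((σ₂ * H' * σ₁ - σ₁ * H' * σ₂) i j) t := by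
  simp only [gammaStarM, Matrix.add_apply, Matrix.sub_apply]
  exact ((entry_const γ t i j).add (entry_mulc σ₁ (entry_cmul σ₂ hH) i j)).sub
    (entry_mulc σ₂ (entry_cmul σ₁ hH) i j) |>.congr_deriv (by simp)

/-- **Evolution equation for the linkage matrix:** if
`∂ₓH₀ = σ₁⁻¹σ₂H₁ - H₁σ₂σ₁⁻¹ + σ₁⁻¹γ*H₀ - H₀γσ₁⁻¹` and
`∂ₜH₀ = i ∂ₓH₁ + i ∂ₓ[H₀] σ₁ H₀`, then
`∂ₜγ* = -i γ* ∂ₓ[H₀] σ₁ + i σ₁ ∂ₓₓ[H₀] σ₁ + i σ₁ ∂ₓ[H₀] γ*`. -/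
theorem linkage_matrix_evolution
    (σ₁ σ₂ γ : Matrix (Fin 2) (Fin 2) ℂ) (hσ₁ : IsUnit σ₁)
    (H0 H0x H0xx H0t H1 H1x : ℝ → ℝ → Matrix (Fin 2) (Fin 2) ℂ)
    (hH0x : ∀ (x t : ℝ) (i j : Fin 2),
      HasDerivAt (fun y => H0 y t i j) (H0x x t i j) x)
    (hH0xx : ∀ (x t : ℝ) (i j : Fin 2),
      HasDerivAt (fun y => H0x y t i j) (H0xx x t i j) x)
    (hH0t : ∀ (x t : ℝ) (i j : Fin 2),
      HasDerivAt (fun s => H0 x s i j) (H0t x t i j) t)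
    (hH1x : ∀ (x t : ℝ) (i j : Fin 2),
      HasDerivAt (fun y => H1 y t i j) (H1x x t i j) x)
    (hrec : ∀ x t : ℝ,
      H0x x t = σ₁⁻¹ * σ₂ * H1 x t - H1 x t * (σ₂ * σ₁⁻¹) +
        σ₁⁻¹ * gammaStarM σ₁ σ₂ γ (H0 x t) * H0 x t - H0 x t * (γ * σ₁⁻¹))
    (hevol : ∀ x t : ℝ,
      H0t x t = Complex.I • H1x x t + Complex.I • (H0x x t * σ₁ * H0 x t)) :
    ∀ (x t : ℝ) (i j : Fin 2),
      HasDerivAt (fun s => gammaStarM σ₁ σ₂ γ (H0 x s) i j)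
        (((-Complex.I) • (gammaStarM σ₁ σ₂ γ (H0 x t) * (H0x x t * σ₁)) +
          Complex.I • (σ₁ * (H0xx x t * σ₁)) +
          Complex.I • (σ₁ * (H0x x t * gammaStarM σ₁ σ₂ γ (H0 x t)))) i j) t := by
  intro x t i j
  have hdet : IsUnit σ₁.det := (Matrix.isUnit_iff_isUnit_det σ₁).mp hσ₁
  have h1 : σ₁ * σ₁⁻¹ = 1 := Matrix.mul_nonsing_inv σ₁ hdet
  have h2 : σ₁⁻¹ * σ₁ = 1 := Matrix.nonsing_inv_mul σ₁ hdet
  -- second x-derivative of H0 via the recursion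
  have hxx : H0xx x t =
      σ₁⁻¹ * σ₂ * H1x x t - H1x x t * (σ₂ * σ₁⁻¹)
        + (σ₁⁻¹ * (σ₂ * H0x x t * σ₁ - σ₁ * H0x x t * σ₂) * H0 x t
           + σ₁⁻¹ * gammaStarM σ₁ σ₂ γ (H0 x t) * H0x x t)
        - H0x x t * (γ * σ₁⁻¹) := by
    ext i j
    refine (hH0xx x t i j).unique ?_
    have hfun : (fun y => H0x y t i j) = fun y =>
        (σ₁⁻¹ * σ₂ * H1 y t - H1 y t * (σ₂ * σ₁⁻¹) +
          σ₁⁻¹ * gammaStarM σ₁ σ₂ γ (H0 y t) * H0 y t - H0 y t * (γ * σ₁⁻¹)) i j := by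
      funext y; rw [hrec y t]
    rw [hfun]
    simp only [Matrix.sub_apply, Matrix.add_apply]
    have hq : ∀ i j, HasDerivAt
        (fun y => (σ₁⁻¹ * gammaStarM σ₁ σ₂ γ (H0 y t) * H0 y t) i j)
        ((σ₁⁻¹ * (σ₂ * H0x x t * σ₁ - σ₁ * H0x x t * σ₂) * H0 x t
          + σ₁⁻¹ * gammaStarM σ₁ σ₂ γ (H0 x t) * H0x x t) i j) x := by
      intro i j
      have := entry_mul (A := fun y => σ₁⁻¹ * gammaStarM σ₁ σ₂ γ (H0 y t))
        (B := fun y => H0 y t)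
        (fun i j => entry_cmul σ₁⁻¹ (entry_gamma σ₁ σ₂ γ (fun i j => hH0x x t i j)) i j)
        (fun i j => hH0x x t i j) i j
      simpa [Matrix.mul_assoc] using this
    have := (((entry_cmul (σ₁⁻¹ * σ₂) (fun i j => hH1x x t i j) i j).fun_sub
        (entry_mulc (σ₂ * σ₁⁻¹) (fun i j => hH1x x t i j) i j)).fun_add (hq i j)).fun_sub
        (entry_mulc (γ * σ₁⁻¹) (fun i j => hH0x x t i j) i j)
    simpa using this
  -- t-derivative of gammaStar
  have hgt := entry_gamma σ₁ σ₂ γ (H := fun s => H0 x s) (fun i j => hH0t x t i j) i j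
  -- algebra: the two derivative matrices agree
  have key : σ₂ * H0t x t * σ₁ - σ₁ * H0t x t * σ₂ =
      (-Complex.I) • (gammaStarM σ₁ σ₂ γ (H0 x t) * (H0x x t * σ₁)) +
        Complex.I • (σ₁ * (H0xx x t * σ₁)) +
        Complex.I • (σ₁ * (H0x x t * gammaStarM σ₁ σ₂ γ (H0 x t))) := by
    rw [hevol x t, hxx]
    have h3 : ∀ X : Matrix (Fin 2) (Fin 2) ℂ, σ₁ * (σ₁⁻¹ * X) = X := fun X => by
      rw [← Matrix.mul_assoc, h1, Matrix.one_mul]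
    have h4 : ∀ X : Matrix (Fin 2) (Fin 2) ℂ, σ₁⁻¹ * (σ₁ * X) = X := fun X => by
      rw [← Matrix.mul_assoc, h2, Matrix.one_mul]
    have factor : ∀ Z : Matrix (Fin 2) (Fin 2) ℂ,
        (-Complex.I) • Z = Complex.I • (-Z) := fun Z => by simp
    simp only [gammaStarM, factor, Matrix.smul_mul, Matrix.mul_smul, ← smul_sub, ← smul_add]
    congr 1
    simp only [mul_add, add_mul, mul_sub, sub_mul, Matrix.mul_assoc, h1, h2, h3, h4,
      Matrix.mul_one, Matrix.one_mul, neg_add, neg_sub]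
    abel
  rw [key] at hgt
  exact hgt
end

section
/- Global invertibility of X: let H be a complex Hilbert space, σ₂ a 2×2 complex matrix acting on ℂ², and let B : ℝ → L(ℂ², H), C : ℝ → L(H, ℂ²), B* : ℝ → L(ℂ², H), C* : ℝ → L(H, ℂ²), X, X* : ℝ → L(H, H) be differentiable in operator norm with X'(x) = B(x)∘σ₂∘C(x) and (X*)'(x) = −B*(x)∘σ₂∘C*(x). Assume the intertwining relations X(x)∘B*(x) = B(x), C*(x)∘X(x) = C(x), X*(x)∘B(x) = B*(x), C(x)∘X*(x) = C*(x) hold for all x, and that X(0)∘X*(0) = id_H and X*(0)∘X(0) = id_H. Then X(x)∘X*(x) = id_H and X*(x)∘X(x) = id_H for all x ∈ ℝ; in particular X(x) is invertible with inverse X*(x) for every x. -/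
open ContinuousLinearMap

/-- **Global invertibility of `X`:** if `X' = B σ₂ C`, `(X*)' = -B* σ₂ C*`, the
intertwining relations `X B* = B`, `C* X = C`, `X* B = B*`, `C X* = C*` hold, and
`X(0) X*(0) = id = X*(0) X(0)`, then `X(x) X*(x) = id = X*(x) X(x)` for all `x`;
in particular `X(x)` is invertible with inverse `X*(x)`. -/
theorem global_invertibility_of_X
    {H : Type*} [NormedAddCommGroup H] [InnerProductSpace ℂ H] [CompleteSpace H]
    (σ₂ : (Fin 2 → ℂ) →L[ℂ] (Fin 2 → ℂ))
    (B Bst : ℝ → ((Fin 2 → ℂ) →L[ℂ] H))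
    (C Cst : ℝ → (H →L[ℂ] (Fin 2 → ℂ)))
    (X Xst : ℝ → (H →L[ℂ] H))
    (hB : Differentiable ℝ B) (hBst : Differentiable ℝ Bst)
    (hC : Differentiable ℝ C) (hCst : Differentiable ℝ Cst)
    (hX : ∀ x : ℝ, HasDerivAt X ((B x ∘L σ₂) ∘L C x) x)
    (hXst : ∀ x : ℝ, HasDerivAt Xst (-((Bst x ∘L σ₂) ∘L Cst x)) x)
    (h₁ : ∀ x : ℝ, X x ∘L Bst x = B x)
    (h₂ : ∀ x : ℝ, Cst x ∘L X x = C x)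
    (h₃ : ∀ x : ℝ, Xst x ∘L B x = Bst x)
    (h₄ : ∀ x : ℝ, C x ∘L Xst x = Cst x)
    (h₀ : X 0 ∘L Xst 0 = 1 ∧ Xst 0 ∘L X 0 = 1) :
    ∀ x : ℝ, X x ∘L Xst x = 1 ∧ Xst x ∘L X x = 1 := by
  have key1 : ∀ x : ℝ, HasDerivAt (fun y => X y * Xst y) 0 x := by
    intro x
    have h := (hX x).mul (hXst x)
    have e : ((B x ∘L σ₂) ∘L C x) * Xst x + (X x) * (-((Bst x ∘L σ₂) ∘L Cst x)) = 0 := by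
      show ((B x ∘L σ₂) ∘L C x) ∘L Xst x + (X x) ∘L (-((Bst x ∘L σ₂) ∘L Cst x)) = 0
      rw [comp_neg, comp_assoc, h₄, ← comp_assoc, ← comp_assoc, h₁, comp_assoc]
      abel
    rw [e] at h
    exact h.congr_deriv rfl
  have key2 : ∀ x : ℝ, HasDerivAt (fun y => Xst y * X y) 0 x := by
    intro x
    have h := (hXst x).mul (hX x)
    have e : (-((Bst x ∘L σ₂) ∘L Cst x)) * X x + (Xst x) * ((B x ∘L σ₂) ∘L C x) = 0 := by
      show (-((Bst x ∘L σ₂) ∘L Cst x)) ∘L X x + (Xst x) ∘L ((B x ∘L σ₂) ∘L C x) = 0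
      rw [neg_comp, comp_assoc, h₂, ← comp_assoc, ← comp_assoc, h₃, comp_assoc]
      abel
    rw [e] at h
    exact h.congr_deriv rfl
  have c1 := is_const_of_deriv_eq_zero (f := fun y => X y * Xst y)
    (fun x => (key1 x).differentiableAt) (fun x => (key1 x).deriv)
  have c2 := is_const_of_deriv_eq_zero (f := fun y => Xst y * X y)
    (fun x => (key2 x).differentiableAt) (fun x => (key2 x).deriv)
  intro x
  exact ⟨(c1 x 0).trans h₀.1, (c2 x 0).trans h₀.2⟩
end
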